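/- arXiv:2508.15416 — 4 statements merged into one kernel-verified Lean document; each statement's English description precedes it below -/
import Mathlib

section
/- Let d ≥ 1, T > 0, ε > 0, γ > 1. Let ρ, θ : (0,T) × ℝ^d → ℝ be positive C¹ functions and u : (0,T) × ℝ^d → ℝ^d a C¹ vector field satisfying pointwise on (0,T) × ℝ^d the mass equation ∂_t ρ + div(ρu) = 0, the momentum equations ∂_t(ρ u_i) + div(ρ u_i u) + ε^{−2} ∂_{x_i} p = 0 for each i, and the total potential temperature equation ∂_t(ρθ) + div(ρθ u) = 0, where p = (ρθ)^γ. Then the total energy identity holds pointwise: ∂_t(½ ρ |u|² + ε^{−2} Π_γ(ρθ)) + div((½ ρ |u|² + ε^{−2} ψ_γ(ρθ) − ε^{−2} ψ_γ′(1) ρθ + ε^{−2} p) u) = 0. -/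
open Set MeasureTheory

/-- Time partial derivative `∂ₜ f` of a function of `(t, x) ∈ ℝ × ℝ^d`. -/
noncomputable def pderivT {d : ℕ} (f : ℝ × (Fin d → ℝ) → ℝ) (z : ℝ × (Fin d → ℝ)) : ℝ :=
  fderiv ℝ f z (1, 0)

/-- Spatial partial derivative `∂_{x i} f` of a function of `(t, x) ∈ ℝ × ℝ^d`. -/
noncomputable def pderivX {d : ℕ} (i : Fin d) (f : ℝ × (Fin d → ℝ) → ℝ)
    (z : ℝ × (Fin d → ℝ)) : ℝ :=
  fderiv ℝ f z (0, Pi.single i 1)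

/-- Spatial divergence of a (time-dependent) vector field on `ℝ^d`. -/
noncomputable def diverg {d : ℕ} (w : ℝ × (Fin d → ℝ) → Fin d → ℝ)
    (z : ℝ × (Fin d → ℝ)) : ℝ :=
  ∑ i, pderivX i (fun y => w y i) z

/-- The Helmholtz function `ψ_γ(z) = z^γ / (γ - 1)`. -/
noncomputable def psiH (γ : ℝ) (z : ℝ) : ℝ := z ^ γ / (γ - 1)

/-- The derivative `ψ_γ'(z) = γ z^(γ-1) / (γ - 1)` of the Helmholtz function. -/
noncomputable def psiH' (γ : ℝ) (z : ℝ) : ℝ := γ * z ^ (γ - 1) / (γ - 1)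

/-- The relative internal energy `Π_γ(z) = ψ_γ(z) - ψ_γ(1) - ψ_γ'(1) (z - 1)`. -/
noncomputable def PiH (γ : ℝ) (z : ℝ) : ℝ := psiH γ z - psiH γ 1 - psiH' γ 1 * (z - 1)

section helpers
variable {d : ℕ} {f g : ℝ × (Fin d → ℝ) → ℝ} {x v : ℝ × (Fin d → ℝ)} {c p : ℝ}

theorem Dmul (hf : DifferentiableAt ℝ f x) (hg : DifferentiableAt ℝ g x) (v) :
    fderiv ℝ (fun y => f y * g y) x v
      = f x * fderiv ℝ g x v + g x * fderiv ℝ f x v := by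
  rw [fderiv_fun_mul hf hg]; simp

theorem Dadd (hf : DifferentiableAt ℝ f x) (hg : DifferentiableAt ℝ g x) (v) :
    fderiv ℝ (fun y => f y + g y) x v = fderiv ℝ f x v + fderiv ℝ g x v := by
  rw [fderiv_fun_add hf hg]; simp

theorem Dsub (hf : DifferentiableAt ℝ f x) (hg : DifferentiableAt ℝ g x) (v) :
    fderiv ℝ (fun y => f y - g y) x v = fderiv ℝ f x v - fderiv ℝ g x v := by
  rw [fderiv_fun_sub hf hg]; simp

theorem Dconst (c : ℝ) (v) : fderiv ℝ (fun _ : ℝ × (Fin d → ℝ) => c) x v = 0 := by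
  simp

theorem Dsq (hf : DifferentiableAt ℝ f x) (v) :
    fderiv ℝ (fun y => f y ^ 2) x v = 2 * f x * fderiv ℝ f x v := by
  simp only [pow_two]
  rw [Dmul hf hf]; ring

theorem Dsum {A : Fin d → ℝ × (Fin d → ℝ) → ℝ}
    (hA : ∀ i, DifferentiableAt ℝ (A i) x) (v) :
    fderiv ℝ (fun y => ∑ i, A i y) x v = ∑ i, fderiv ℝ (A i) x v := by
  rw [fderiv_fun_sum (fun i _ => hA i)]
  simp

theorem Drpow (hf : DifferentiableAt ℝ f x) (h0 : f x ≠ 0) (v) :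
    fderiv ℝ (fun y => f y ^ p) x v = p * f x ^ (p - 1) * fderiv ℝ f x v := by
  rw [(hf.hasFDerivAt.rpow_const (Or.inl h0)).fderiv]
  simp


end helpers

theorem psiH_eq (γ t : ℝ) : psiH γ t = (γ-1)⁻¹ * t ^ γ := by unfold psiH; ring

theorem psiH'_one (γ : ℝ) : psiH' γ 1 = γ / (γ-1) := by
  unfold psiH'; rw [Real.one_rpow, mul_one]

theorem PiH_eq (γ t : ℝ) :
    PiH γ t = (γ-1)⁻¹ * t ^ γ - (γ-1)⁻¹ - γ/(γ-1) * (t - 1) := by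
  unfold PiH psiH psiH'; rw [Real.one_rpow, Real.one_rpow, mul_one]; ring

theorem total_energy_identity
    (d : ℕ) (hd : 1 ≤ d) (T ε γ : ℝ) (hT : 0 < T) (hε : 0 < ε) (hγ : 1 < γ)
    (ρ θ : ℝ × (Fin d → ℝ) → ℝ) (u : ℝ × (Fin d → ℝ) → Fin d → ℝ)
    (hρ : ContDiffOn ℝ 1 ρ (Ioo (0:ℝ) T ×ˢ (univ : Set (Fin d → ℝ))))
    (hθ : ContDiffOn ℝ 1 θ (Ioo (0:ℝ) T ×ˢ (univ : Set (Fin d → ℝ))))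
    (hu : ContDiffOn ℝ 1 u (Ioo (0:ℝ) T ×ˢ (univ : Set (Fin d → ℝ))))
    (hρpos : ∀ z ∈ Ioo (0:ℝ) T ×ˢ (univ : Set (Fin d → ℝ)), 0 < ρ z)
    (hθpos : ∀ z ∈ Ioo (0:ℝ) T ×ˢ (univ : Set (Fin d → ℝ)), 0 < θ z)
    (hmass : ∀ z ∈ Ioo (0:ℝ) T ×ˢ (univ : Set (Fin d → ℝ)),
      pderivT ρ z + diverg (fun y i => ρ y * u y i) z = 0)
    (hmom : ∀ z ∈ Ioo (0:ℝ) T ×ˢ (univ : Set (Fin d → ℝ)), ∀ i : Fin d,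
      pderivT (fun y => ρ y * u y i) z + diverg (fun y j => ρ y * u y i * u y j) z
        + (ε ^ 2)⁻¹ * pderivX i (fun y => (ρ y * θ y) ^ γ) z = 0)
    (htemp : ∀ z ∈ Ioo (0:ℝ) T ×ˢ (univ : Set (Fin d → ℝ)),
      pderivT (fun y => ρ y * θ y) z + diverg (fun y i => ρ y * θ y * u y i) z = 0) :
    ∀ z ∈ Ioo (0:ℝ) T ×ˢ (univ : Set (Fin d → ℝ)),
      pderivT (fun y => (1 / 2) * ρ y * ∑ i, (u y i) ^ 2 + (ε ^ 2)⁻¹ * PiH γ (ρ y * θ y)) z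
        + diverg (fun y j =>
            ((1 / 2) * ρ y * ∑ i, (u y i) ^ 2 + (ε ^ 2)⁻¹ * psiH γ (ρ y * θ y)
              - (ε ^ 2)⁻¹ * psiH' γ 1 * (ρ y * θ y) + (ε ^ 2)⁻¹ * (ρ y * θ y) ^ γ) * u y j) z
        = 0 := by
  intro z hz
  have hS : IsOpen (Ioo (0:ℝ) T ×ˢ (univ : Set (Fin d → ℝ))) := isOpen_Ioo.prod isOpen_univ
  have hzn : (Ioo (0:ℝ) T ×ˢ (univ : Set (Fin d → ℝ))) ∈ nhds z := hS.mem_nhds hz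
  have hρd : DifferentiableAt ℝ ρ z := (hρ.contDiffAt hzn).differentiableAt one_ne_zero
  have hθd : DifferentiableAt ℝ θ z := (hθ.contDiffAt hzn).differentiableAt one_ne_zero
  have hud : DifferentiableAt ℝ u z := (hu.contDiffAt hzn).differentiableAt one_ne_zero
  have hui : ∀ i, DifferentiableAt ℝ (fun y => u y i) z := fun i => differentiableAt_pi.mp hud i
  have hq0' : 0 < ρ z * θ z := mul_pos (hρpos z hz) (hθpos z hz)
  have hq0 : ρ z * θ z ≠ 0 := ne_of_gt hq0'
  have hqd : DifferentiableAt ℝ (fun y => ρ y * θ y) z := hρd.mul hθd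
  have hpd : DifferentiableAt ℝ (fun y => (ρ y * θ y) ^ γ) z := hqd.rpow_const (Or.inl hq0)
  -- instantiated rewrite rules
  have e1 : ∀ v, fderiv ℝ (fun y => ρ y * θ y) z v
      = ρ z * fderiv ℝ θ z v + θ z * fderiv ℝ ρ z v := Dmul hρd hθd
  have e2 : ∀ v, fderiv ℝ (fun y => (ρ y * θ y) ^ γ) z v
      = γ * (ρ z * θ z) ^ (γ - 1) * (ρ z * fderiv ℝ θ z v + θ z * fderiv ℝ ρ z v) := by
    intro v; rw [Drpow hqd hq0, e1]
  have e3 : ∀ i v, fderiv ℝ (fun y => ρ y * u y i) z v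
      = ρ z * fderiv ℝ (fun y => u y i) z v + u z i * fderiv ℝ ρ z v :=
    fun i => Dmul hρd (hui i)
  have e4 : ∀ i j v, fderiv ℝ (fun y => ρ y * u y i * u y j) z v
      = ρ z * u z i * fderiv ℝ (fun y => u y j) z v
        + u z j * (ρ z * fderiv ℝ (fun y => u y i) z v + u z i * fderiv ℝ ρ z v) := by
    intro i j v; rw [Dmul (f := fun y => ρ y * u y i) (hρd.mul (hui i)) (hui j), e3]
  have e5 : ∀ j v, fderiv ℝ (fun y => ρ y * θ y * u y j) z v
      = ρ z * θ z * fderiv ℝ (fun y => u y j) z v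
        + u z j * (ρ z * fderiv ℝ θ z v + θ z * fderiv ℝ ρ z v) := by
    intro j v; rw [Dmul hqd (hui j), e1]
  -- hypotheses in scalar form
  have hmass' := hmass z hz
  have hmom' := hmom z hz
  have htemp' := htemp z hz
  simp only [pderivT, pderivX, diverg, e1, e2, e3, e4, e5] at hmass' hmom' htemp'
  clear hmass hmom htemp hρ hθ hu hρpos hθpos hzn hS hud
  simp only [pderivT, pderivX, diverg, PiH_eq, psiH_eq, psiH'_one]
  simp (disch := fun_prop) only [Dadd, Dsub, Dmul, Dsum, Dsq, Dconst, e1, e2]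
  have hfold : ∀ v, (∑ i, 2 * u z i * fderiv ℝ (fun y => u y i) z v)
      = 2 * ∑ i, u z i * fderiv ℝ (fun y => u y i) z v := by
    intro v; rw [Finset.mul_sum]; exact Finset.sum_congr rfl fun i _ => by ring
  simp only [hfold]
  have hqq : (ρ z * θ z) ^ (γ - 1) * (ρ z * θ z) = (ρ z * θ z) ^ γ := by
    have h1 : γ - 1 + 1 = γ := by ring
    rw [← Real.rpow_add_one hq0, h1]
  have hγ1 : (γ - 1) * (γ - 1)⁻¹ = 1 :=
    mul_inv_cancel₀ (by linarith : γ - 1 ≠ 0)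
  -- sum of momentum equations weighted by velocity
  have hmomS : ∑ i, u z i *
      (ρ z * (fderiv ℝ (fun y => u y i) z) (1, 0) + u z i * (fderiv ℝ ρ z) (1, 0) +
          ∑ x : Fin d,
            (ρ z * u z i * (fderiv ℝ (fun y => u y x) z) (0, Pi.single x 1) +
              u z x *
                (ρ z * (fderiv ℝ (fun y => u y i) z) (0, Pi.single x 1) + u z i * (fderiv ℝ ρ z) (0, Pi.single x 1))) +
        (ε ^ 2)⁻¹ *
          (γ * (ρ z * θ z) ^ (γ - 1) *
            (ρ z * (fderiv ℝ θ z) (0, Pi.single i 1) + θ z * (fderiv ℝ ρ z) (0, Pi.single i 1)))) = 0 :=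
    Finset.sum_eq_zero fun i _ => by rw [hmom' i, mul_zero]
  have step1 : ∀ i : Fin d, u z i *
      (ρ z * (fderiv ℝ (fun y => u y i) z) (1, 0) + u z i * (fderiv ℝ ρ z) (1, 0) +
          ∑ x : Fin d,
            (ρ z * u z i * (fderiv ℝ (fun y => u y x) z) (0, Pi.single x 1) +
              u z x *
                (ρ z * (fderiv ℝ (fun y => u y i) z) (0, Pi.single x 1) + u z i * (fderiv ℝ ρ z) (0, Pi.single x 1))) +
        (ε ^ 2)⁻¹ *
          (γ * (ρ z * θ z) ^ (γ - 1) *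
            (ρ z * (fderiv ℝ θ z) (0, Pi.single i 1) + θ z * (fderiv ℝ ρ z) (0, Pi.single i 1))))
      = ρ z * (u z i * (fderiv ℝ (fun y => u y i) z) (1, 0))
        + (fderiv ℝ ρ z) (1, 0) * u z i ^ 2
        + (∑ x : Fin d, u z i *
            (ρ z * u z i * (fderiv ℝ (fun y => u y x) z) (0, Pi.single x 1) +
              u z x *
                (ρ z * (fderiv ℝ (fun y => u y i) z) (0, Pi.single x 1) + u z i * (fderiv ℝ ρ z) (0, Pi.single x 1))))
        + (ε ^ 2)⁻¹ * (γ * (ρ z * θ z) ^ (γ - 1)) *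
            (u z i * (ρ z * (fderiv ℝ θ z) (0, Pi.single i 1) + θ z * (fderiv ℝ ρ z) (0, Pi.single i 1))) := by
    intro i
    rw [mul_add, mul_add, Finset.mul_sum]
    ring
  have hmomS2 := (Finset.sum_congr rfl (fun i _ => step1 i)).symm.trans hmomS
  rw [Finset.sum_add_distrib, Finset.sum_add_distrib, Finset.sum_add_distrib,
      ← Finset.mul_sum, ← Finset.mul_sum, ← Finset.mul_sum, Finset.sum_comm] at hmomS2
  have hnn : ∀ x : Fin d, (∑ i : Fin d, u z i *
      (ρ z * u z i * (fderiv ℝ (fun y => u y x) z) (0, Pi.single x 1) +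
        u z x *
          (ρ z * (fderiv ℝ (fun y => u y i) z) (0, Pi.single x 1) + u z i * (fderiv ℝ ρ z) (0, Pi.single x 1))))
      = (∑ i : Fin d, u z i ^ 2) *
          (ρ z * (fderiv ℝ (fun y => u y x) z) (0, Pi.single x 1) + u z x * (fderiv ℝ ρ z) (0, Pi.single x 1))
        + ρ z * (u z x * ∑ i : Fin d, u z i * (fderiv ℝ (fun y => u y i) z) (0, Pi.single x 1)) := by
    intro x
    rw [Finset.sum_mul, Finset.mul_sum, Finset.mul_sum, ← Finset.sum_add_distrib]
    exact Finset.sum_congr rfl fun i _ => by ring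
  rw [Finset.sum_congr rfl (fun x _ => hnn x), Finset.sum_add_distrib,
      ← Finset.mul_sum, ← Finset.mul_sum] at hmomS2
  -- rewrite the flux sum in the goal
  have keyx : ∀ x : Fin d,
      ((1 / 2 * ρ z * ∑ i : Fin d, u z i ^ 2 + (ε ^ 2)⁻¹ * ((γ - 1)⁻¹ * (ρ z * θ z) ^ γ) -
                (ε ^ 2)⁻¹ * (γ / (γ - 1)) * (ρ z * θ z) +
              (ε ^ 2)⁻¹ * (ρ z * θ z) ^ γ) *
            (fderiv ℝ (fun y => u y x) z) (0, Pi.single x 1) +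
          u z x *
            (1 / 2 * ρ z * (2 * ∑ i : Fin d, u z i * (fderiv ℝ (fun y => u y i) z) (0, Pi.single x 1)) +
                    (∑ i : Fin d, u z i ^ 2) * (1 / 2 * (fderiv ℝ ρ z) (0, Pi.single x 1) + ρ z * 0) +
                  ((ε ^ 2)⁻¹ *
                      ((γ - 1)⁻¹ *
                          (γ * (ρ z * θ z) ^ (γ - 1) *
                            (ρ z * (fderiv ℝ θ z) (0, Pi.single x 1) + θ z * (fderiv ℝ ρ z) (0, Pi.single x 1))) +
                        (ρ z * θ z) ^ γ * 0) +
                    (γ - 1)⁻¹ * (ρ z * θ z) ^ γ * 0) -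
                ((ε ^ 2)⁻¹ * (γ / (γ - 1)) *
                    (ρ z * (fderiv ℝ θ z) (0, Pi.single x 1) + θ z * (fderiv ℝ ρ z) (0, Pi.single x 1)) +
                  ρ z * θ z * ((ε ^ 2)⁻¹ * 0 + γ / (γ - 1) * 0)) +
              ((ε ^ 2)⁻¹ *
                  (γ * (ρ z * θ z) ^ (γ - 1) *
                    (ρ z * (fderiv ℝ θ z) (0, Pi.single x 1) + θ z * (fderiv ℝ ρ z) (0, Pi.single x 1))) +
                (ρ z * θ z) ^ γ * 0)))
      = (-(1/2) * ∑ i : Fin d, u z i ^ 2) *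
          (ρ z * (fderiv ℝ (fun y => u y x) z) (0, Pi.single x 1) + u z x * (fderiv ℝ ρ z) (0, Pi.single x 1))
        + ((ε ^ 2)⁻¹ * (γ * (ρ z * θ z) ^ (γ - 1))) *
            (u z x * (ρ z * (fderiv ℝ θ z) (0, Pi.single x 1) + θ z * (fderiv ℝ ρ z) (0, Pi.single x 1)))
        + ((∑ i : Fin d, u z i ^ 2) *
            (ρ z * (fderiv ℝ (fun y => u y x) z) (0, Pi.single x 1) + u z x * (fderiv ℝ ρ z) (0, Pi.single x 1))
          + ρ z * (u z x * ∑ i : Fin d, u z i * (fderiv ℝ (fun y => u y i) z) (0, Pi.single x 1)))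
        + ((ε ^ 2)⁻¹ * (γ * (ρ z * θ z) ^ (γ - 1) / (γ - 1) - γ / (γ - 1))) *
            (ρ z * θ z * (fderiv ℝ (fun y => u y x) z) (0, Pi.single x 1) +
              u z x * (ρ z * (fderiv ℝ θ z) (0, Pi.single x 1) + θ z * (fderiv ℝ ρ z) (0, Pi.single x 1))) := by
    intro x
    linear_combination (-(ε ^ 2)⁻¹ * (γ / (γ - 1)) *
      (fderiv ℝ (fun y => u y x) z) (0, Pi.single x 1)) * hqq
      + (-(ε ^ 2)⁻¹ * (ρ z * θ z) ^ γ *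
        (fderiv ℝ (fun y => u y x) z) (0, Pi.single x 1)) * hγ1
  simp only [keyx]
  simp only [Finset.sum_add_distrib]
  simp only [← Finset.mul_sum]
  linear_combination hmomS2
    + ((ε ^ 2)⁻¹ * (γ * (ρ z * θ z) ^ (γ - 1) / (γ - 1) - γ / (γ - 1))) * htemp'
    - (1 / 2 * ∑ i : Fin d, u z i ^ 2) * hmass'
end

section
/- Let d ≥ 1, T > 0, ε > 0, γ > 1, and η ≥ 0. Let ρ, θ : (0,T) × ℝ^d → ℝ be positive C¹ functions and u : (0,T) × ℝ^d → ℝ^d a C¹ vector field, with p = (ρθ)^γ of class C², satisfying pointwise on (0,T) × ℝ^d the mass equation ∂_t ρ + div(ρu) = 0, the momentum equations ∂_t(ρ u_i) + div(ρ u_i u) + ε^{−2} ∂_{x_i} p = 0 for each i, and the shifted total potential temperature equation ∂_t(ρθ) + div(ρθ (u − δu)) = 0 with velocity shift δu := η ∇p. Then the total energy satisfies the dissipation identity: ∂_t(ε^{−2} Π_γ(ρθ) + ½ ρ |u|²) + div(½ ρ |u|² u + ε^{−2}(ψ_γ(ρθ) − ψ_γ′(1) ρθ + p)(u − δu)) =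 − ε^{−2} η |∇p|² ≤ 0. -/
open Set MeasureTheory

section helpers
variable {E : Type*} [NormedAddCommGroup E] [NormedSpace ℝ E]

private lemma dmul {f g : E → ℝ} {x : E} (hf : DifferentiableAt ℝ f x)
    (hg : DifferentiableAt ℝ g x) (w : E) : fderiv ℝ (fun y => f y * g y) x w
      = f x * fderiv ℝ g x w + g x * fderiv ℝ f x w := by
  rw [fderiv_fun_mul hf hg]; simp

private lemma dadd {f g : E → ℝ} {x : E} (hf : DifferentiableAt ℝ f x)
    (hg : DifferentiableAt ℝ g x) (w : E) :
    fderiv ℝ (fun y => f y + g y) x w = fderiv ℝ f x w + fderiv ℝ g x w := by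
  rw [fderiv_fun_add hf hg]; simp

private lemma dsub {f g : E → ℝ} {x : E} (hf : DifferentiableAt ℝ f x)
    (hg : DifferentiableAt ℝ g x) (w : E) :
    fderiv ℝ (fun y => f y - g y) x w = fderiv ℝ f x w - fderiv ℝ g x w := by
  rw [fderiv_fun_sub hf hg]; simp

private lemma dconstmul {f : E → ℝ} {x : E} (hf : DifferentiableAt ℝ f x) (c : ℝ)
    (w : E) : fderiv ℝ (fun y => c * f y) x w = c * fderiv ℝ f x w := by
  rw [fderiv_const_mul hf c]; simp

private lemma ddivconst {f : E → ℝ} {x : E} (hf : DifferentiableAt ℝ f x) (c : ℝ)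
    (w : E) : fderiv ℝ (fun y => f y / c) x w = fderiv ℝ f x w / c := by
  have h : (fun y => f y / c) = fun y => c⁻¹ * f y := by ext y; ring
  rw [h, dconstmul hf c⁻¹, div_eq_inv_mul]

private lemma dsum {ι : Type*} {s : Finset ι} {A : ι → E → ℝ} {x : E}
    (h : ∀ i ∈ s, DifferentiableAt ℝ (A i) x) (w : E) :
    fderiv ℝ (fun y => ∑ i ∈ s, A i y) x w = ∑ i ∈ s, fderiv ℝ (A i) x w := by
  rw [fderiv_fun_sum h]; simp

private lemma dsq {f : E → ℝ} {x : E} (hf : DifferentiableAt ℝ f x) (w : E) :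
    fderiv ℝ (fun y => f y ^ 2) x w = 2 * f x * fderiv ℝ f x w := by
  have h : (fun y => f y ^ 2) = fun y => f y * f y := by ext y; ring
  rw [h, dmul hf hf]; ring

private lemma drpow {f : E → ℝ} {x : E} (hf : DifferentiableAt ℝ f x) (hpos : 0 < f x)
    (γ : ℝ) (w : E) :
    fderiv ℝ (fun y => f y ^ γ) x w = γ * f x ^ (γ - 1) * fderiv ℝ f x w := by
  have h : HasFDerivAt (fun y => f y ^ γ) ((γ * f x ^ (γ - 1)) • fderiv ℝ f x) x :=
    (Real.hasDerivAt_rpow_const (p := γ) (Or.inl hpos.ne')).comp_hasFDerivAt x hf.hasFDerivAt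
  rw [h.fderiv]; simp [mul_assoc]

private lemma dconst {x : E} (c : ℝ) (w : E) : fderiv ℝ (fun _ : E => c) x w = 0 := by
  simp

end helpers

section pdlemmas
variable {d : ℕ} {x : ℝ × (Fin d → ℝ)} {f g : ℝ × (Fin d → ℝ) → ℝ} {i : Fin d}

private lemma pdT_add (hf : DifferentiableAt ℝ f x) (hg : DifferentiableAt ℝ g x) :
    pderivT (fun y => f y + g y) x = pderivT f x + pderivT g x := dadd hf hg _
private lemma pdX_add (hf : DifferentiableAt ℝ f x) (hg : DifferentiableAt ℝ g x) :
    pderivX i (fun y => f y + g y) x = pderivX i f x + pderivX i g x := dadd hf hg _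
private lemma pdT_sub (hf : DifferentiableAt ℝ f x) (hg : DifferentiableAt ℝ g x) :
    pderivT (fun y => f y - g y) x = pderivT f x - pderivT g x := dsub hf hg _
private lemma pdX_sub (hf : DifferentiableAt ℝ f x) (hg : DifferentiableAt ℝ g x) :
    pderivX i (fun y => f y - g y) x = pderivX i f x - pderivX i g x := dsub hf hg _
private lemma pdT_mul (hf : DifferentiableAt ℝ f x) (hg : DifferentiableAt ℝ g x) :
    pderivT (fun y => f y * g y) x = f x * pderivT g x + g x * pderivT f x := dmul hf hg _
private lemma pdX_mul (hf : DifferentiableAt ℝ f x) (hg : DifferentiableAt ℝ g x) :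
    pderivX i (fun y => f y * g y) x = f x * pderivX i g x + g x * pderivX i f x := dmul hf hg _
private lemma pdT_constmul (hf : DifferentiableAt ℝ f x) (c : ℝ) :
    pderivT (fun y => c * f y) x = c * pderivT f x := dconstmul hf c _
private lemma pdX_constmul (hf : DifferentiableAt ℝ f x) (c : ℝ) :
    pderivX i (fun y => c * f y) x = c * pderivX i f x := dconstmul hf c _
private lemma pdT_divconst (hf : DifferentiableAt ℝ f x) (c : ℝ) :
    pderivT (fun y => f y / c) x = pderivT f x / c := ddivconst hf c _
private lemma pdX_divconst (hf : DifferentiableAt ℝ f x) (c : ℝ) :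
    pderivX i (fun y => f y / c) x = pderivX i f x / c := ddivconst hf c _
private lemma pdT_sum {ι : Type*} {s : Finset ι} {A : ι → ℝ × (Fin d → ℝ) → ℝ}
    (h : ∀ j ∈ s, DifferentiableAt ℝ (A j) x) :
    pderivT (fun y => ∑ j ∈ s, A j y) x = ∑ j ∈ s, pderivT (A j) x := dsum h _
private lemma pdX_sum {ι : Type*} {s : Finset ι} {A : ι → ℝ × (Fin d → ℝ) → ℝ}
    (h : ∀ j ∈ s, DifferentiableAt ℝ (A j) x) :
    pderivX i (fun y => ∑ j ∈ s, A j y) x = ∑ j ∈ s, pderivX i (A j) x := dsum h _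
private lemma pdT_sq (hf : DifferentiableAt ℝ f x) :
    pderivT (fun y => f y ^ 2) x = 2 * f x * pderivT f x := dsq hf _
private lemma pdX_sq (hf : DifferentiableAt ℝ f x) :
    pderivX i (fun y => f y ^ 2) x = 2 * f x * pderivX i f x := dsq hf _
private lemma pdT_rpow (hf : DifferentiableAt ℝ f x) (hpos : 0 < f x) (γ : ℝ) :
    pderivT (fun y => f y ^ γ) x = γ * f x ^ (γ - 1) * pderivT f x := drpow hf hpos γ _
private lemma pdX_rpow (hf : DifferentiableAt ℝ f x) (hpos : 0 < f x) (γ : ℝ) :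
    pderivX i (fun y => f y ^ γ) x = γ * f x ^ (γ - 1) * pderivX i f x := drpow hf hpos γ _
private lemma pdT_const (c : ℝ) : pderivT (fun _ => c) x = 0 := dconst c _
private lemma pdX_const (c : ℝ) : pderivX i (fun _ => c) x = 0 := dconst c _

end pdlemmas

theorem total_energy_dissipation_identity
    (d : ℕ) (hd : 1 ≤ d) (T ε γ η : ℝ) (hT : 0 < T) (hε : 0 < ε) (hγ : 1 < γ) (hη : 0 ≤ η)
    (ρ θ : ℝ × (Fin d → ℝ) → ℝ) (u : ℝ × (Fin d → ℝ) → Fin d → ℝ)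
    (hρ : ContDiffOn ℝ 1 ρ (Ioo (0:ℝ) T ×ˢ (univ : Set (Fin d → ℝ))))
    (hθ : ContDiffOn ℝ 1 θ (Ioo (0:ℝ) T ×ˢ (univ : Set (Fin d → ℝ))))
    (hu : ContDiffOn ℝ 1 u (Ioo (0:ℝ) T ×ˢ (univ : Set (Fin d → ℝ))))
    (hp : ContDiffOn ℝ 2 (fun y => (ρ y * θ y) ^ γ) (Ioo (0:ℝ) T ×ˢ (univ : Set (Fin d → ℝ))))
    (hρpos : ∀ z ∈ Ioo (0:ℝ) T ×ˢ (univ : Set (Fin d → ℝ)), 0 < ρ z)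
    (hθpos : ∀ z ∈ Ioo (0:ℝ) T ×ˢ (univ : Set (Fin d → ℝ)), 0 < θ z)
    (hmass : ∀ z ∈ Ioo (0:ℝ) T ×ˢ (univ : Set (Fin d → ℝ)),
      pderivT ρ z + diverg (fun y i => ρ y * u y i) z = 0)
    (hmom : ∀ z ∈ Ioo (0:ℝ) T ×ˢ (univ : Set (Fin d → ℝ)), ∀ i : Fin d,
      pderivT (fun y => ρ y * u y i) z + diverg (fun y j => ρ y * u y i * u y j) z
        + (ε ^ 2)⁻¹ * pderivX i (fun y => (ρ y * θ y) ^ γ) z = 0)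
    (htemp : ∀ z ∈ Ioo (0:ℝ) T ×ˢ (univ : Set (Fin d → ℝ)),
      pderivT (fun y => ρ y * θ y) z
        + diverg (fun y i => ρ y * θ y
            * (u y i - η * pderivX i (fun y' => (ρ y' * θ y') ^ γ) y)) z = 0) :
    ∀ z ∈ Ioo (0:ℝ) T ×ˢ (univ : Set (Fin d → ℝ)),
      pderivT (fun y => (ε ^ 2)⁻¹ * PiH γ (ρ y * θ y)
            + (1 / 2) * ρ y * ∑ i, (u y i) ^ 2) z
        + diverg (fun y j => (1 / 2) * ρ y * (∑ i, (u y i) ^ 2) * u y j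
            + (ε ^ 2)⁻¹ * (psiH γ (ρ y * θ y) - psiH' γ 1 * (ρ y * θ y) + (ρ y * θ y) ^ γ)
              * (u y j - η * pderivX j (fun y' => (ρ y' * θ y') ^ γ) y)) z
        = -((ε ^ 2)⁻¹ * η * ∑ i, (pderivX i (fun y => (ρ y * θ y) ^ γ) z) ^ 2)
      ∧ -((ε ^ 2)⁻¹ * η * ∑ i, (pderivX i (fun y => (ρ y * θ y) ^ γ) z) ^ 2) ≤ 0 := by

  intro z hz
  have hS : IsOpen (Ioo (0:ℝ) T ×ˢ (univ : Set (Fin d → ℝ))) := isOpen_Ioo.prod isOpen_univ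
  have hnz : (Ioo (0:ℝ) T ×ˢ (univ : Set (Fin d → ℝ))) ∈ nhds z := hS.mem_nhds hz
  have hρz : DifferentiableAt ℝ ρ z := (hρ.contDiffAt hnz).differentiableAt one_ne_zero
  have hθz : DifferentiableAt ℝ θ z := (hθ.contDiffAt hnz).differentiableAt one_ne_zero
  have huz : ∀ i, DifferentiableAt ℝ (fun y => u y i) z :=
    fun i => ((contDiffAt_pi.mp (hu.contDiffAt hnz)) i).differentiableAt one_ne_zero
  have hmpos : 0 < ρ z * θ z := mul_pos (hρpos z hz) (hθpos z hz)
  have hpz : DifferentiableAt ℝ (fun y => (ρ y * θ y) ^ γ) z :=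
    (hp.contDiffAt hnz).differentiableAt (by norm_num)
  have hPX : ∀ j, DifferentiableAt ℝ
      (fun y => pderivX j (fun y' => (ρ y' * θ y') ^ γ) y) z := by
    intro j
    have h2 : ContDiffAt ℝ 1 (fderiv ℝ (fun y' => (ρ y' * θ y') ^ γ)) z :=
      (hp.contDiffAt hnz).fderiv_right (by norm_num)
    exact (h2.differentiableAt one_ne_zero).clm_apply (differentiableAt_const _)
  have H1 := hmass z hz
  have H2 : ∀ i, _ := fun i => hmom z hz i
  have H3 := htemp z hz
  constructor
  · simp (disch := first | assumption | fun_prop) only [PiH, psiH, psiH', Real.one_rpow,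
      diverg, pdT_add, pdX_add, pdT_sub, pdX_sub, pdT_mul, pdX_mul, pdT_constmul,
      pdX_constmul, pdT_divconst, pdX_divconst, pdT_sum, pdX_sum, pdT_sq, pdX_sq,
      pdT_rpow, pdX_rpow, pdT_const, pdX_const] at H1 H2 H3 ⊢

    have hq : (ρ z * θ z) ^ (γ - 1) * (ρ z * θ z) = (ρ z * θ z) ^ γ := by
      rw [← Real.rpow_add_one hmpos.ne' (γ - 1)]
      congr 1
      ring
    have hs : (γ - 1) * (γ - 1)⁻¹ = 1 := mul_inv_cancel₀ (by linarith)
    have cv1 : (∑ x, (ρ z * pderivX x (fun y => u y x) z + u z x * pderivX x ρ z))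
        = ρ z * (∑ x, pderivX x (fun y => u y x) z) + (∑ x, u z x * pderivX x ρ z) := by
      rw [Finset.mul_sum, ← Finset.sum_add_distrib]
    have cvSW : (∑ i, u z i * (∑ x, u z x * pderivX x (fun y => u y i) z)) = (∑ x, u z x * (∑ x1, u z x1 * pderivX x (fun y => u y x1) z)) := by
      simp only [Finset.mul_sum]
      rw [Finset.sum_comm]
      exact Finset.sum_congr rfl fun x _ => Finset.sum_congr rfl fun i _ => by ring
    have cvInner : ∀ i : Fin d,
        (∑ x, (ρ z * u z i * pderivX x (fun y => u y x) z + u z x * (ρ z * pderivX x (fun y => u y i) z + u z i * pderivX x ρ z)))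
          = (ρ z * u z i) * (∑ x, pderivX x (fun y => u y x) z) + ρ z * (∑ x, u z x * pderivX x (fun y => u y i) z) + u z i * (∑ x, u z x * pderivX x ρ z) := by
      intro i
      calc (∑ x, (ρ z * u z i * pderivX x (fun y => u y x) z + u z x * (ρ z * pderivX x (fun y => u y i) z + u z i * pderivX x ρ z)))
          = ∑ x, ((ρ z * u z i) * pderivX x (fun y => u y x) z + ρ z * (u z x * pderivX x (fun y => u y i) z) + u z i * (u z x * pderivX x ρ z)) :=
            Finset.sum_congr rfl fun x _ => by ring
        _ = (ρ z * u z i) * (∑ x, pderivX x (fun y => u y x) z) + ρ z * (∑ x, u z x * pderivX x (fun y => u y i) z) + u z i * (∑ x, u z x * pderivX x ρ z) := by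
            simp only [Finset.sum_add_distrib, ← Finset.mul_sum]
    have H2s0 : (∑ i, u z i * (ρ z * pderivT (fun y => u y i) z + u z i * pderivT ρ z + ∑ x, (ρ z * u z i * pderivX x (fun y => u y x) z + u z x * (ρ z * pderivX x (fun y => u y i) z + u z i * pderivX x ρ z)) + (ε ^ 2)⁻¹ * (γ * (ρ z * θ z) ^ (γ - 1) * (ρ z * pderivX i θ z + θ z * pderivX i ρ z)))) = 0 :=
      Finset.sum_eq_zero fun i _ => by rw [H2 i, mul_zero]
    have cv2 : (∑ i, u z i * (ρ z * pderivT (fun y => u y i) z + u z i * pderivT ρ z + ∑ x, (ρ z * u z i * pderivX x (fun y => u y x) z + u z x * (ρ z * pderivX x (fun y => u y i) z + u z i * pderivX x ρ z)) + (ε ^ 2)⁻¹ * (γ * (ρ z * θ z) ^ (γ - 1) * (ρ z * pderivX i θ z + θ z * pderivX i ρ z))))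
        = ρ z * (∑ x, u z x * pderivT (fun y => u y x) z) + pderivT ρ z * (∑ i, u z i ^ 2) + (ρ z * (∑ x, pderivX x (fun y => u y x) z)) * (∑ i, u z i ^ 2) + ρ z * (∑ x, u z x * (∑ x1, u z x1 * pderivX x (fun y => u y x1) z))
          + (∑ x, u z x * pderivX x ρ z) * (∑ i, u z i ^ 2) + ((ε ^ 2)⁻¹ * (γ * (ρ z * θ z) ^ (γ - 1))) * (∑ x, u z x * (ρ z * pderivX x θ z + θ z * pderivX x ρ z)) := by
      calc (∑ i, u z i * (ρ z * pderivT (fun y => u y i) z + u z i * pderivT ρ z + ∑ x, (ρ z * u z i * pderivX x (fun y => u y x) z + u z x * (ρ z * pderivX x (fun y => u y i) z + u z i * pderivX x ρ z)) + (ε ^ 2)⁻¹ * (γ * (ρ z * θ z) ^ (γ - 1) * (ρ z * pderivX i θ z + θ z * pderivX i ρ z))))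
          = ∑ i, (ρ z * (u z i * pderivT (fun y => u y i) z) + pderivT ρ z * u z i ^ 2
              + (ρ z * (∑ x, pderivX x (fun y => u y x) z)) * u z i ^ 2 + ρ z * (u z i * (∑ x, u z x * pderivX x (fun y => u y i) z))
              + (∑ x, u z x * pderivX x ρ z) * u z i ^ 2 + ((ε ^ 2)⁻¹ * (γ * (ρ z * θ z) ^ (γ - 1))) * (u z i * (ρ z * pderivX i θ z + θ z * pderivX i ρ z))) :=
            Finset.sum_congr rfl fun i _ => by rw [cvInner i]; ring
        _ = _ := by
            simp only [Finset.sum_add_distrib, ← Finset.mul_sum]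
            rw [cvSW]
    have cv3 : (∑ x, (ρ z * θ z * (pderivX x (fun y => u y x) z - (η * pderivX x (pderivX x fun y' => (ρ y' * θ y') ^ γ) z + γ * (ρ z * θ z) ^ (γ - 1) * (ρ z * pderivX x θ z + θ z * pderivX x ρ z) * 0)) + (u z x - η * (γ * (ρ z * θ z) ^ (γ - 1) * (ρ z * pderivX x θ z + θ z * pderivX x ρ z))) * (ρ z * pderivX x θ z + θ z * pderivX x ρ z)))
        = ρ z * θ z * (∑ x, pderivX x (fun y => u y x) z) - (ρ z * θ z * η) * (∑ x, pderivX x (pderivX x fun y' => (ρ y' * θ y') ^ γ) z) + (∑ x, u z x * (ρ z * pderivX x θ z + θ z * pderivX x ρ z)) - (η * (γ * (ρ z * θ z) ^ (γ - 1))) * (∑ x, (ρ z * pderivX x θ z + θ z * pderivX x ρ z) ^ 2) := by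
      calc (∑ x, (ρ z * θ z * (pderivX x (fun y => u y x) z - (η * pderivX x (pderivX x fun y' => (ρ y' * θ y') ^ γ) z + γ * (ρ z * θ z) ^ (γ - 1) * (ρ z * pderivX x θ z + θ z * pderivX x ρ z) * 0)) + (u z x - η * (γ * (ρ z * θ z) ^ (γ - 1) * (ρ z * pderivX x θ z + θ z * pderivX x ρ z))) * (ρ z * pderivX x θ z + θ z * pderivX x ρ z)))
          = ∑ x, (ρ z * θ z * pderivX x (fun y => u y x) z - (ρ z * θ z * η) * pderivX x (pderivX x fun y' => (ρ y' * θ y') ^ γ) z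
              + u z x * (ρ z * pderivX x θ z + θ z * pderivX x ρ z) - (η * (γ * (ρ z * θ z) ^ (γ - 1))) * (ρ z * pderivX x θ z + θ z * pderivX x ρ z) ^ 2) :=
            Finset.sum_congr rfl fun x _ => by ring
        _ = _ := by
            simp only [Finset.sum_add_distrib, Finset.sum_sub_distrib, ← Finset.mul_sum]
    have inner2 : ∀ x' : Fin d, (∑ x1, 2 * u z x1 * pderivX x' (fun y => u y x1) z)
        = 2 * (∑ x1, u z x1 * pderivX x' (fun y => u y x1) z) := by
      intro x'
      rw [Finset.mul_sum]
      exact Finset.sum_congr rfl fun x1 _ => by ring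
    have gc1 : (∑ x, 2 * u z x * pderivT (fun y => u y x) z) = 2 * (∑ x, u z x * pderivT (fun y => u y x) z) := by
      rw [Finset.mul_sum]
      exact Finset.sum_congr rfl fun x _ => by ring
    have gcR : (∑ x, (γ * (ρ z * θ z) ^ (γ - 1) * (ρ z * pderivX x θ z + θ z * pderivX x ρ z)) ^ 2) = (γ * (ρ z * θ z) ^ (γ - 1)) ^ 2 * (∑ x, (ρ z * pderivX x θ z + θ z * pderivX x ρ z) ^ 2) := by
      rw [Finset.mul_sum]
      exact Finset.sum_congr rfl fun x _ => by ring
    have gcF : (∑ x, ((1 / 2 * ρ z * (∑ i, u z i ^ 2)) * pderivX x (fun y => u y x) z + u z x * (1 / 2 * ρ z * ∑ x1, 2 * u z x1 * pderivX x (fun y => u y x1) z + (∑ i, u z i ^ 2) * (1 / 2 * pderivX x ρ z + ρ z * (0 / 2))) + ((ε ^ 2)⁻¹ * ((ρ z * θ z) ^ γ / (γ - 1) - γ * 1 / (γ - 1) * (ρ z * θ z) + (ρ z * θ z) ^ γ) * (pderivX x (fun y => u y x) z - (η * pderivX x (pderivX x fun y' => (ρ y' * θ y') ^ γ) z + γ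 * (ρ z * θ z) ^ (γ - 1) * (ρ z * pderivX x θ z + θ z * pderivX x ρ z) * 0)) + (u z x - η * (γ * (ρ z * θ z) ^ (γ - 1) * (ρ z * pderivX x θ z + θ z * pderivX x ρ z))) * ((ε ^ 2)⁻¹ * (γ * (ρ z * θ z) ^ (γ - 1) * (ρ z * pderivX x θ z + θ z * pderivX x ρ z) / (γ - 1) - (γ * 1 / (γ - 1) * (ρ z * pderivX x θ z + θ z * pderivX x ρ z) + ρ z * θ z * ((γ * 0 + 1 * 0) / (γ - 1))) + γ * (ρ z * θ z) ^ (γ - 1) * (ρ z * pderivX x θ z + θ z * pderivX x ρ z)) + ((ρ z * θ z) ^ γ / (γ - 1) - γ * 1 / (γ - 1) * (ρ z * θ z) + (ρ z * θ z) ^ γ) * 0))))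
        = (1 / 2 * ρ z * (∑ i, u z i ^ 2) + (ε ^ 2)⁻¹ * ((ρ z * θ z) ^ γ / (γ - 1) - γ * 1 / (γ - 1) * (ρ z * θ z) + (ρ z * θ z) ^ γ)) * (∑ x, pderivX x (fun y => u y x) z) + ρ z * (∑ x, u z x * (∑ x1, u z x1 * pderivX x (fun y => u y x1) z))
          + (1 / 2 * (∑ i, u z i ^ 2)) * (∑ x, u z x * pderivX x ρ z) - ((ε ^ 2)⁻¹ * ((ρ z * θ z) ^ γ / (γ - 1) - γ * 1 / (γ - 1) * (ρ z * θ z) + (ρ z * θ z) ^ γ) * η) * (∑ x, pderivX x (pderivX x fun y' => (ρ y' * θ y') ^ γ) z)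
          + ((ε ^ 2)⁻¹ * (γ * (ρ z * θ z) ^ (γ - 1) / (γ - 1) - γ * 1 / (γ - 1) + γ * (ρ z * θ z) ^ (γ - 1))) * (∑ x, u z x * (ρ z * pderivX x θ z + θ z * pderivX x ρ z)) - (η * (γ * (ρ z * θ z) ^ (γ - 1)) * ((ε ^ 2)⁻¹ * (γ * (ρ z * θ z) ^ (γ - 1) / (γ - 1) - γ * 1 / (γ - 1) + γ * (ρ z * θ z) ^ (γ - 1)))) * (∑ x, (ρ z * pderivX x θ z + θ z * pderivX x ρ z) ^ 2) := by
      calc (∑ x, ((1 / 2 * ρ z * (∑ i, u z i ^ 2)) * pderivX x (fun y => u y x) z + u z x * (1 / 2 * ρ z * ∑ x1, 2 * u z x1 * pderivX x (fun y => u y x1) z + (∑ i, u z i ^ 2) * (1 / 2 * pderivX x ρ z + ρ z * (0 / 2))) + ((ε ^ 2)⁻¹ * ((ρ z * θ z) ^ γ / (γ - 1) - γ * 1 / (γ - 1) * (ρ z * θ z) + (ρ z * θ z) ^ γ) * (pderivX x (fun y => u y x) z - (η * pderivX x (pderivX x fun y' => (ρ y' * θ y') ^ γ) z + γ * (ρ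 z * θ z) ^ (γ - 1) * (ρ z * pderivX x θ z + θ z * pderivX x ρ z) * 0)) + (u z x - η * (γ * (ρ z * θ z) ^ (γ - 1) * (ρ z * pderivX x θ z + θ z * pderivX x ρ z))) * ((ε ^ 2)⁻¹ * (γ * (ρ z * θ z) ^ (γ - 1) * (ρ z * pderivX x θ z + θ z * pderivX x ρ z) / (γ - 1) - (γ * 1 / (γ - 1) * (ρ z * pderivX x θ z + θ z * pderivX x ρ z) + ρ z * θ z * ((γ * 0 + 1 * 0) / (γ - 1))) + γ * (ρ z * θ z) ^ (γ - 1) * (ρ z * pderivX x θ z + θ z * pderivX x ρ z)) + ((ρ z * θ z) ^ γ / (γ - 1) - γ * 1 / (γ - 1) * (ρ z * θ z) + (ρ z * θ z) ^ γ) * 0))))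
          = ∑ x, ((1 / 2 * ρ z * (∑ i, u z i ^ 2) + (ε ^ 2)⁻¹ * ((ρ z * θ z) ^ γ / (γ - 1) - γ * 1 / (γ - 1) * (ρ z * θ z) + (ρ z * θ z) ^ γ)) * pderivX x (fun y => u y x) z
              + ρ z * (u z x * (∑ x1, u z x1 * pderivX x (fun y => u y x1) z))
              + (1 / 2 * (∑ i, u z i ^ 2)) * (u z x * pderivX x ρ z)
              - ((ε ^ 2)⁻¹ * ((ρ z * θ z) ^ γ / (γ - 1) - γ * 1 / (γ - 1) * (ρ z * θ z) + (ρ z * θ z) ^ γ) * η) * pderivX x (pderivX x fun y' => (ρ y' * θ y') ^ γ) z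
              + ((ε ^ 2)⁻¹ * (γ * (ρ z * θ z) ^ (γ - 1) / (γ - 1) - γ * 1 / (γ - 1) + γ * (ρ z * θ z) ^ (γ - 1))) * (u z x * (ρ z * pderivX x θ z + θ z * pderivX x ρ z))
              - (η * (γ * (ρ z * θ z) ^ (γ - 1)) * ((ε ^ 2)⁻¹ * (γ * (ρ z * θ z) ^ (γ - 1) / (γ - 1) - γ * 1 / (γ - 1) + γ * (ρ z * θ z) ^ (γ - 1)))) * (ρ z * pderivX x θ z + θ z * pderivX x ρ z) ^ 2) :=
            Finset.sum_congr rfl fun x _ => by rw [inner2 x]; ring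
        _ = _ := by
            simp only [Finset.sum_add_distrib, Finset.sum_sub_distrib, ← Finset.mul_sum]
    linear_combination (-(1 / 2) * (∑ i, u z i ^ 2)) * H1 + ((1 / 2) * (∑ i, u z i ^ 2)) * cv1
      + H2s0 - cv2
      + ((ε ^ 2)⁻¹ * (γ * (ρ z * θ z) ^ (γ - 1) * (γ - 1)⁻¹ - γ * (γ - 1)⁻¹)) * H3 - ((ε ^ 2)⁻¹ * (γ * (ρ z * θ z) ^ (γ - 1) * (γ - 1)⁻¹ - γ * (γ - 1)⁻¹)) * cv3
      - (γ * (γ - 1)⁻¹ * (ε ^ 2)⁻¹ * ((∑ x, pderivX x (fun y => u y x) z) - η * (∑ x, pderivX x (pderivX x fun y' => (ρ y' * θ y') ^ γ) z))) * hq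
      - ((ε ^ 2)⁻¹ * ((∑ x, pderivX x (fun y => u y x) z) - η * (∑ x, pderivX x (pderivX x fun y' => (ρ y' * θ y') ^ γ) z)) * (ρ z * θ z) ^ γ) * hs
      + gcF + (1 / 2 * ρ z) * gc1 + ((ε ^ 2)⁻¹ * η) * gcR
  · have hnn : 0 ≤ (ε ^ 2)⁻¹ * η * ∑ i, (pderivX i (fun y => (ρ y * θ y) ^ γ) z) ^ 2 := by
      positivity
    linarith
end

section
/- Let d ≥ 1, T > 0, ε > 0, γ > 1, η ≥ 0. Let ρ, θ : (0,T) × ℝ^d → ℝ be positive C¹ functions and u : (0,T) × ℝ^d → ℝ^d a C¹ vector field, all ℤ^d-periodic in the space variable, with p = (ρθ)^γ of class C², satisfying pointwise the mass equation ∂_t ρ + div(ρu) = 0, the momentum equations ∂_t(ρ u_i) + div(ρ u_i u) + ε^{−2} ∂_{x_i} p = 0 for each i, and the shifted total potential temperature equation ∂_t(ρθ) + div(ρθ(u − δu)) = 0 with velocity shift δu := η ∇p. Then the total energy E(t) := ∫_{[0,1]^d} (½ ρ(t,x) |u(t,x)|² + ε^{−2} Π_γ(ρ(t,x) θ(t,x)))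 dx is non-increasing in t on (0,T). -/
open Set MeasureTheory

noncomputable def pdv {d : ℕ} (v : ℝ × (Fin d → ℝ)) (f : ℝ × (Fin d → ℝ) → ℝ)
    (z : ℝ × (Fin d → ℝ)) : ℝ := fderiv ℝ f z v

section pdvlemmas
variable {d : ℕ} {f g : ℝ × (Fin d → ℝ) → ℝ} {z v : ℝ × (Fin d → ℝ)}

lemma pderivT_eq_pdv : pderivT f z = pdv (1, 0) f z := rfl
lemma pderivX_eq_pdv {i : Fin d} : pderivX i f z = pdv (0, Pi.single i 1) f z := rfl

lemma pdv_const (c : ℝ) : pdv v (fun _ => c) z = 0 := by simp [pdv]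

lemma pdv_add (hf : DifferentiableAt ℝ f z) (hg : DifferentiableAt ℝ g z) :
    pdv v (fun y => f y + g y) z = pdv v f z + pdv v g z := by
  simp [pdv, fderiv_fun_add hf hg]

lemma pdv_sub (hf : DifferentiableAt ℝ f z) (hg : DifferentiableAt ℝ g z) :
    pdv v (fun y => f y - g y) z = pdv v f z - pdv v g z := by
  simp [pdv, fderiv_fun_sub hf hg]

lemma pdv_const_mul (hf : DifferentiableAt ℝ f z) (c : ℝ) :
    pdv v (fun y => c * f y) z = c * pdv v f z := by
  simp [pdv, fderiv_const_mul hf c]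

lemma pdv_sub_const (hf : DifferentiableAt ℝ f z) (c : ℝ) :
    pdv v (fun y => f y - c) z = pdv v f z := by
  rw [pdv_sub hf (differentiableAt_const c), pdv_const, sub_zero]

lemma pdv_mul (hf : DifferentiableAt ℝ f z) (hg : DifferentiableAt ℝ g z) :
    pdv v (fun y => f y * g y) z = f z * pdv v g z + g z * pdv v f z := by
  simp [pdv, fderiv_fun_mul hf hg]

lemma pdv_sum {ι : Type*} (s : Finset ι) (A : ι → ℝ × (Fin d → ℝ) → ℝ)
    (h : ∀ i ∈ s, DifferentiableAt ℝ (A i) z) :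
    pdv v (fun y => ∑ i ∈ s, A i y) z = ∑ i ∈ s, pdv v (A i) z := by
  simp [pdv, fderiv_fun_sum h]

lemma pdv_comp {Φ : ℝ → ℝ} {c : ℝ} (hΦ : HasDerivAt Φ c (f z))
    (hf : DifferentiableAt ℝ f z) :
    pdv v (fun y => Φ (f y)) z = c * pdv v f z := by
  have h := hΦ.comp_hasFDerivAt z hf.hasFDerivAt
  have h2 : fderiv ℝ (fun y => Φ (f y)) z = c • fderiv ℝ f z := h.fderiv
  simp [pdv, h2]
end pdvlemmas

section pointwise
variable {d : ℕ}

/-- derivative of `PiH γ` -/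
lemma hasDerivAt_PiH (γ : ℝ) (hγ : 1 < γ) {q : ℝ} (hq : 0 < q) :
    HasDerivAt (PiH γ) (γ * q ^ (γ - 1) / (γ - 1) - γ / (γ - 1)) q := by
  have h1 : HasDerivAt (fun s : ℝ => s ^ γ) (γ * q ^ (γ - 1)) q :=
    Real.hasDerivAt_rpow_const (Or.inl hq.ne')
  have h2 : HasDerivAt (fun s : ℝ => psiH γ s) (γ * q ^ (γ - 1) / (γ - 1)) q := h1.div_const _
  have h3 : HasDerivAt (fun s : ℝ => psiH' γ 1 * (s - 1)) (psiH' γ 1) q := by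
    simpa using (((hasDerivAt_id q).sub_const 1).const_mul (psiH' γ 1))
  have h4 := (h2.sub_const (psiH γ 1)).sub h3
  have hps : psiH' γ 1 = γ / (γ - 1) := by simp [psiH']
  rw [show PiH γ = fun s => psiH γ s - psiH γ 1 - psiH' γ 1 * (s - 1) from rfl, hps]
  rw [hps] at h4
  exact h4
end pointwise


lemma key_algebra {d : ℕ} (c η C' CV P r Rt h Ht : ℝ)
    (Rx Hx Px Pxx U Ut : Fin d → ℝ) (Ux : Fin d → Fin d → ℝ)
    (hC : CV + P - 1 = C' * (r * h))
    (hM : Rt + ∑ j, (Rx j * U j + r * Ux j j) = 0)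
    (hMom : ∀ i, (Rt * U i + r * Ut i)
      + (∑ j, (Rx j * U i * U j + r * Ux i j * U j + r * U i * Ux j j)) + c * Px i = 0)
    (hT : (Rt * h + r * Ht)
      + ∑ j, ((Rx j * h + r * Hx j) * (U j - η * Px j) + (r * h) * (Ux j j - η * Pxx j)) = 0) :
    (1/2 * Rt * (∑ i, U i ^ 2) + 1/2 * r * (∑ i, 2 * U i * Ut i)) + c * (C' * (Rt * h + r * Ht))
      = -(∑ j,
          (1/2 * Rx j * (∑ i, U i ^ 2) * U j
            + 1/2 * r * ((∑ i, 2 * U i * Ux i j) * U j + (∑ i, U i ^ 2) * Ux j j)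
            + c * (C' * ((Rx j * h + r * Hx j) * (U j - η * Px j)) + CV * (Ux j j - η * Pxx j))
            + c * (Px j * U j + (P - 1) * Ux j j)
            - η * c * (Px j * Px j + (P - 1) * Pxx j)))
        - η * c * ∑ j, Px j ^ 2 := by
  have hS2 : ∀ j : Fin d, (∑ i, 2 * U i * Ux i j) = 2 * ∑ i, U i * Ux i j := by
    intro j; rw [Finset.mul_sum]; exact Finset.sum_congr rfl fun i _ => by ring
  have hT2 : (∑ i, 2 * U i * Ut i) = 2 * ∑ i, U i * Ut i := by
    rw [Finset.mul_sum]; exact Finset.sum_congr rfl fun i _ => by ring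
  set S := ∑ i, U i ^ 2 with hS
  set TT := ∑ i, U i * Ut i with hTT
  set UP := ∑ i, Px i * U i with hUP
  set TU := ∑ j, U j * (∑ i, U i * Ux i j) with hTU
  set G1 := ∑ j, Rx j * U j with hG1
  set G2 := ∑ j, Ux j j with hG2
  set G4 := ∑ j, (Rx j * h + r * Hx j) * (U j - η * Px j) with hG4
  set GP := ∑ j, Pxx j with hGP
  set GQ := ∑ j, Px j ^ 2 with hGQ
  -- reduce the mass equation
  have hM' : Rt + G1 + r * G2 = 0 := by
    rw [hG1, hG2, Finset.mul_sum, add_assoc, ← Finset.sum_add_distrib]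
    exact hM
  -- reduce the temperature equation
  have hT' : (Rt * h + r * Ht) + G4 + (r * h * G2 - η * (r * h) * GP) = 0 := by
    have expand : ∀ j ∈ Finset.univ, (Rx j * h + r * Hx j) * (U j - η * Px j)
        + (r * h) * (Ux j j - η * Pxx j)
        = ((Rx j * h + r * Hx j) * (U j - η * Px j)) + ((r * h) * Ux j j
          - (η * (r * h)) * Pxx j) := fun j _ => by ring
    rw [Finset.sum_congr rfl expand, Finset.sum_add_distrib, Finset.sum_sub_distrib,
      ← Finset.mul_sum, ← Finset.mul_sum, ← hG4, ← hG2, ← hGP, ← add_assoc] at hT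
    exact hT
  -- momentum equations multiplied by `U i` and summed
  have e1 : Rt * S + r * TT + (S * G1 + r * TU + r * S * G2) + c * UP = 0 := by
    have h0 : ∑ i, U i * ((Rt * U i + r * Ut i)
        + (∑ j, (Rx j * U i * U j + r * Ux i j * U j + r * U i * Ux j j)) + c * Px i) = 0 :=
      Finset.sum_eq_zero fun i _ => by rw [hMom i, mul_zero]
    have expand : ∀ i ∈ Finset.univ, U i * ((Rt * U i + r * Ut i)
        + (∑ j, (Rx j * U i * U j + r * Ux i j * U j + r * U i * Ux j j)) + c * Px i)
        = (Rt * U i ^ 2 + r * (U i * Ut i))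
          + (∑ j, ((Rx j * U j) * U i ^ 2 + (r * U j) * (U i * Ux i j) + (r * Ux j j) * U i ^ 2))
          + c * (Px i * U i) := by
      intro i _
      rw [mul_add, mul_add, Finset.mul_sum]
      congr 1
      · congr 1
        · ring
        · exact Finset.sum_congr rfl fun j _ => by ring
      · ring
    rw [Finset.sum_congr rfl expand, Finset.sum_add_distrib, Finset.sum_add_distrib] at h0
    have p1 : ∑ i, (Rt * U i ^ 2 + r * (U i * Ut i)) = Rt * S + r * TT := by
      rw [Finset.sum_add_distrib, ← Finset.mul_sum, ← Finset.mul_sum, ← hS, ← hTT]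
    have p3 : ∑ i, c * (Px i * U i) = c * UP := by
      rw [← Finset.mul_sum, ← hUP]
    have p2 : ∑ i, (∑ j, ((Rx j * U j) * U i ^ 2 + (r * U j) * (U i * Ux i j)
        + (r * Ux j j) * U i ^ 2)) = S * G1 + r * TU + r * S * G2 := by
      rw [Finset.sum_comm]
      have inner : ∀ j ∈ Finset.univ, (∑ i, ((Rx j * U j) * U i ^ 2 + (r * U j) * (U i * Ux i j)
          + (r * Ux j j) * U i ^ 2))
          = (Rx j * U j) * S + (r * U j) * (∑ i, U i * Ux i j) + (r * Ux j j) * S := by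
        intro j _
        rw [Finset.sum_add_distrib, Finset.sum_add_distrib, ← Finset.mul_sum, ← Finset.mul_sum,
          ← Finset.mul_sum, ← hS]
      rw [Finset.sum_congr rfl inner]
      have outer : ∀ j ∈ Finset.univ, (Rx j * U j) * S + (r * U j) * (∑ i, U i * Ux i j)
          + (r * Ux j j) * S
          = S * (Rx j * U j) + r * (U j * (∑ i, U i * Ux i j)) + (r * S) * Ux j j :=
        fun j _ => by ring
      rw [Finset.sum_congr rfl outer, Finset.sum_add_distrib, Finset.sum_add_distrib,
        ← Finset.mul_sum, ← Finset.mul_sum, ← Finset.mul_sum, ← hG1, ← hTU, ← hG2]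
    rw [p1, p2, p3] at h0
    exact h0
  -- reduce the big sum in the goal
  have sumW : (∑ j,
          (1/2 * Rx j * S * U j
            + 1/2 * r * ((∑ i, 2 * U i * Ux i j) * U j + S * Ux j j)
            + c * (C' * ((Rx j * h + r * Hx j) * (U j - η * Px j)) + CV * (Ux j j - η * Pxx j))
            + c * (Px j * U j + (P - 1) * Ux j j)
            - η * c * (Px j * Px j + (P - 1) * Pxx j)))
      = (1/2 * S) * G1 + r * TU + (1/2 * r * S + c * CV + c * (P - 1)) * G2
        + (c * C') * G4 + c * UP
        + (- (η * c * CV) - η * c * (P - 1)) * GP + (- (η * c)) * GQ := by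
    have expand : ∀ j ∈ Finset.univ,
        (1/2 * Rx j * S * U j
            + 1/2 * r * ((∑ i, 2 * U i * Ux i j) * U j + S * Ux j j)
            + c * (C' * ((Rx j * h + r * Hx j) * (U j - η * Px j)) + CV * (Ux j j - η * Pxx j))
            + c * (Px j * U j + (P - 1) * Ux j j)
            - η * c * (Px j * Px j + (P - 1) * Pxx j))
        = (1/2 * S) * (Rx j * U j) + r * (U j * (∑ i, U i * Ux i j))
          + (1/2 * r * S + c * CV + c * (P - 1)) * Ux j j
          + (c * C') * ((Rx j * h + r * Hx j) * (U j - η * Px j)) + c * (Px j * U j)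
          + (- (η * c * CV) - η * c * (P - 1)) * Pxx j + (- (η * c)) * Px j ^ 2 := by
      intro j _
      rw [hS2 j]
      ring
    rw [Finset.sum_congr rfl expand]
    simp only [Finset.sum_add_distrib, ← Finset.mul_sum]
    rfl
  rw [hT2, sumW]
  linear_combination e1 - (1/2 * S) * hM' + (c * C') * hT' + (c * G2 - η * c * GP) * hC

lemma pointwise_identity {d : ℕ} (ε γ η : ℝ) (hγ : 1 < γ)
    (ρ θ : ℝ × (Fin d → ℝ) → ℝ) (u : ℝ × (Fin d → ℝ) → Fin d → ℝ)
    (z : ℝ × (Fin d → ℝ))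
    (hρd : DifferentiableAt ℝ ρ z) (hθd : DifferentiableAt ℝ θ z)
    (hud : ∀ i, DifferentiableAt ℝ (fun y => u y i) z)
    (hPxd : ∀ j, DifferentiableAt ℝ (fun y => pderivX j (fun y' => (ρ y' * θ y') ^ γ) y) z)
    (hrpos : 0 < ρ z) (hhpos : 0 < θ z)
    (hmassz : pderivT ρ z + diverg (fun y i => ρ y * u y i) z = 0)
    (hmomz : ∀ i, pderivT (fun y => ρ y * u y i) z
      + diverg (fun y j => ρ y * u y i * u y j) z
      + (ε ^ 2)⁻¹ * pderivX i (fun y => (ρ y * θ y) ^ γ) z = 0)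
    (htempz : pderivT (fun y => ρ y * θ y) z
      + diverg (fun y i => ρ y * θ y
          * (u y i - η * pderivX i (fun y' => (ρ y' * θ y') ^ γ) y)) z = 0) :
    pderivT (fun y => (1/2) * ρ y * ∑ i, (u y i)^2 + (ε ^ 2)⁻¹ * PiH γ (ρ y * θ y)) z
      = - diverg (fun y j => (1/2) * (ρ y * ((∑ i, (u y i)^2) * u y j))
            + (ε ^ 2)⁻¹ * (PiH γ (ρ y * θ y)
                * (u y j - η * pderivX j (fun y' => (ρ y' * θ y') ^ γ) y))
            + (ε ^ 2)⁻¹ * (((ρ y * θ y) ^ γ - 1) * u y j)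
            - η * ((ε ^ 2)⁻¹ * (((ρ y * θ y) ^ γ - 1)
                * pderivX j (fun y' => (ρ y' * θ y') ^ γ) y))) z
        - η * (ε ^ 2)⁻¹ * ∑ j, (pderivX j (fun y' => (ρ y' * θ y') ^ γ) z) ^ 2 := by
  have hγ1 : γ - 1 ≠ 0 := sub_ne_zero.2 (ne_of_gt hγ)
  set c : ℝ := (ε ^ 2)⁻¹ with hc
  -- basic differentiability
  have hqd : DifferentiableAt ℝ (fun y => ρ y * θ y) z := hρd.mul hθd
  have hqpos : 0 < ρ z * θ z := mul_pos hrpos hhpos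
  have hrpow : HasDerivAt (fun s : ℝ => s ^ γ) (γ * (ρ z * θ z) ^ (γ - 1)) (ρ z * θ z) :=
    Real.hasDerivAt_rpow_const (Or.inl hqpos.ne')
  have hPd : DifferentiableAt ℝ (fun y => (ρ y * θ y) ^ γ) z :=
    by have := hrpow.comp_hasFDerivAt z hqd.hasFDerivAt; exact this.differentiableAt
  have hPiHderiv := hasDerivAt_PiH γ hγ hqpos
  have hPiHd : DifferentiableAt ℝ (fun y => PiH γ (ρ y * θ y)) z :=
    by have := hPiHderiv.comp_hasFDerivAt z hqd.hasFDerivAt; exact this.differentiableAt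
  have hsumd : DifferentiableAt ℝ (fun y => ∑ i, (u y i) ^ 2) z :=
    DifferentiableAt.fun_sum (fun i _ => (hud i).pow 2)
  -- atoms
  set C' : ℝ := γ * (ρ z * θ z) ^ (γ - 1) / (γ - 1) - γ / (γ - 1) with hC'
  -- generic expansions (valid for every direction v)
  have hq : ∀ v, pdv v (fun y => ρ y * θ y) z = ρ z * pdv v θ z + θ z * pdv v ρ z :=
    fun v => pdv_mul hρd hθd
  have hPiHexp : ∀ v, pdv v (fun y => PiH γ (ρ y * θ y)) z
      = C' * (ρ z * pdv v θ z + θ z * pdv v ρ z) := by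
    intro v
    rw [← hq v]
    exact pdv_comp hPiHderiv hqd
  have hsumexp : ∀ v, pdv v (fun y => ∑ i, (u y i) ^ 2) z
      = ∑ i, 2 * u z i * pdv v (fun y => u y i) z := by
    intro v
    rw [pdv_sum Finset.univ (fun i y => (u y i) ^ 2) (fun i _ => (hud i).pow 2)]
    refine Finset.sum_congr rfl fun i _ => ?_
    have := pdv_comp (v := v) (hasDerivAt_pow 2 (u z i)) (hud i)
    norm_num at this
    rw [this]
  -- the relation `CV + P - 1 = C' * q`
  have hA : (ρ z * θ z) ^ (γ - 1) * (ρ z * θ z) = (ρ z * θ z) ^ γ := by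
    rw [← Real.rpow_add_one hqpos.ne' (γ - 1)]
    norm_num
  have hCeq : PiH γ (ρ z * θ z) + (ρ z * θ z) ^ γ - 1 = C' * (ρ z * (θ z)) := by
    have h1 : (1:ℝ) ^ γ = 1 := Real.one_rpow γ
    have h2 : (1:ℝ) ^ (γ - 1) = 1 := Real.one_rpow _
    have hA' : (ρ z * θ z) ^ (-1 + γ) * (ρ z * θ z) = (ρ z * θ z) ^ γ := by
      rw [show (-1 + γ) = γ - 1 by ring]; exact hA
    rw [PiH, psiH, psiH, psiH', hC', h1, h2]
    field_simp
    ring_nf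
    nlinarith [hA', sq_nonneg (γ - 1)]
  -- Notation for the pressure function
  set Pf : ℝ × (Fin d → ℝ) → ℝ := fun y => (ρ y * θ y) ^ γ with hPf
  -- differentiability of the shifted velocity factor
  have hvj : ∀ j, DifferentiableAt ℝ
      (fun y => u y j - η * pderivX j Pf y) z :=
    fun j => (hud j).sub ((hPxd j).const_mul η)
  -- hypothesis hM for key_algebra
  have hMk : pderivT ρ z + ∑ j, (pderivX j ρ z * u z j
      + ρ z * pderivX j (fun y => u y j) z) = 0 := by
    have e : ∀ j ∈ Finset.univ, pderivX j (fun y => ρ y * u y j) z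
        = pderivX j ρ z * u z j + ρ z * pderivX j (fun y => u y j) z := by
      intro j _
      have h1 : pdv (0, Pi.single j 1) (fun y => ρ y * u y j) z
          = ρ z * pdv (0, Pi.single j 1) (fun y => u y j) z
            + u z j * pdv (0, Pi.single j 1) ρ z := pdv_mul hρd (hud j)
      show pdv (0, Pi.single j 1) (fun y => ρ y * u y j) z = _
      rw [h1]; show _ = pdv (0, Pi.single j 1) ρ z * u z j
        + ρ z * pdv (0, Pi.single j 1) (fun y => u y j) z
      ring
    rw [← Finset.sum_congr rfl e]
    exact hmassz
  -- hypothesis hMom for key_algebra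
  have hMomk : ∀ i, (pderivT ρ z * u z i + ρ z * pderivT (fun y => u y i) z)
      + (∑ j, (pderivX j ρ z * u z i * u z j
          + ρ z * pderivX j (fun y => u y i) z * u z j
          + ρ z * u z i * pderivX j (fun y => u y j) z))
      + c * pderivX i Pf z = 0 := by
    intro i
    have e1 : pderivT (fun y => ρ y * u y i) z
        = pderivT ρ z * u z i + ρ z * pderivT (fun y => u y i) z := by
      have h1 : pdv (1, 0) (fun y => ρ y * u y i) z
          = ρ z * pdv (1, 0) (fun y => u y i) z + u z i * pdv (1, 0) ρ z :=
        pdv_mul hρd (hud i)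
      show pdv (1, 0) (fun y => ρ y * u y i) z = _
      rw [h1]; show _ = pdv (1, 0) ρ z * u z i + ρ z * pdv (1, 0) (fun y => u y i) z
      ring
    have e2 : ∀ j ∈ Finset.univ, pderivX j (fun y => ρ y * u y i * u y j) z
        = pderivX j ρ z * u z i * u z j
          + ρ z * pderivX j (fun y => u y i) z * u z j
          + ρ z * u z i * pderivX j (fun y => u y j) z := by
      intro j _
      have h1 : pdv (0, Pi.single j 1) (fun y => ρ y * u y i * u y j) z
          = (ρ z * u z i) * pdv (0, Pi.single j 1) (fun y => u y j) z
            + u z j * pdv (0, Pi.single j 1) (fun y => ρ y * u y i) z :=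
        pdv_mul (hρd.mul (hud i)) (hud j)
      have h2 : pdv (0, Pi.single j 1) (fun y => ρ y * u y i) z
          = ρ z * pdv (0, Pi.single j 1) (fun y => u y i) z
            + u z i * pdv (0, Pi.single j 1) ρ z := pdv_mul hρd (hud i)
      show pdv (0, Pi.single j 1) (fun y => ρ y * u y i * u y j) z = _
      rw [h1, h2]
      show _ = pdv (0, Pi.single j 1) ρ z * u z i * u z j
        + ρ z * pdv (0, Pi.single j 1) (fun y => u y i) z * u z j
        + ρ z * u z i * pdv (0, Pi.single j 1) (fun y => u y j) z
      ring
    rw [← e1, ← Finset.sum_congr rfl e2]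
    exact hmomz i
  -- hypothesis hT for key_algebra
  have hTk : (pderivT ρ z * θ z + ρ z * pderivT θ z)
      + ∑ j, ((pderivX j ρ z * θ z + ρ z * pderivX j θ z)
          * (u z j - η * pderivX j Pf z)
        + (ρ z * θ z) * (pderivX j (fun y => u y j) z
          - η * pderivX j (fun y => pderivX j Pf y) z)) = 0 := by
    have e1 : pderivT (fun y => ρ y * θ y) z
        = pderivT ρ z * θ z + ρ z * pderivT θ z := by
      have h1 := hq (1, 0)
      show pdv (1, 0) (fun y => ρ y * θ y) z = _
      rw [h1]; show _ = pdv (1, 0) ρ z * θ z + ρ z * pdv (1, 0) θ z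
      ring
    have e2 : ∀ j ∈ Finset.univ, pderivX j
        (fun y => ρ y * θ y * (u y j - η * pderivX j Pf y)) z
        = (pderivX j ρ z * θ z + ρ z * pderivX j θ z) * (u z j - η * pderivX j Pf z)
          + (ρ z * θ z) * (pderivX j (fun y => u y j) z
            - η * pderivX j (fun y => pderivX j Pf y) z) := by
      intro j _
      have h1 : pdv (0, Pi.single j 1)
          (fun y => ρ y * θ y * (u y j - η * pderivX j Pf y)) z
          = (ρ z * θ z) * pdv (0, Pi.single j 1)
              (fun y => u y j - η * pderivX j Pf y) z
            + (u z j - η * pderivX j Pf z) * pdv (0, Pi.single j 1)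
              (fun y => ρ y * θ y) z := pdv_mul hqd (hvj j)
      have h2 : pdv (0, Pi.single j 1) (fun y => u y j - η * pderivX j Pf y) z
          = pdv (0, Pi.single j 1) (fun y => u y j) z
            - pdv (0, Pi.single j 1) (fun y => η * pderivX j Pf y) z :=
        pdv_sub (hud j) ((hPxd j).const_mul η)
      have h3 : pdv (0, Pi.single j 1) (fun y => η * pderivX j Pf y) z
          = η * pdv (0, Pi.single j 1) (fun y => pderivX j Pf y) z :=
        pdv_const_mul (hPxd j) η
      have h4 := hq (0, Pi.single j 1)
      show pdv (0, Pi.single j 1)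
          (fun y => ρ y * θ y * (u y j - η * pderivX j Pf y)) z = _
      rw [h1, h2, h3, h4]
      simp only [pderivX_eq_pdv]
      ring
    rw [← e1, ← Finset.sum_congr rfl e2]
    exact htempz
  -- apply the algebraic lemma
  have KEY := key_algebra c η C' (PiH γ (ρ z * θ z)) ((ρ z * θ z) ^ γ)
    (ρ z) (pderivT ρ z) (θ z) (pderivT θ z)
    (fun j => pderivX j ρ z) (fun j => pderivX j θ z)
    (fun j => pderivX j Pf z) (fun j => pderivX j (fun y => pderivX j Pf y) z)
    (fun i => u z i) (fun i => pderivT (fun y => u y i) z)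
    (fun i j => pderivX j (fun y => u y i) z)
    hCeq hMk hMomk hTk
  -- expand the goal LHS
  have eL : pderivT (fun y => (1/2) * ρ y * ∑ i, (u y i)^2
      + (ε ^ 2)⁻¹ * PiH γ (ρ y * θ y)) z
      = (1/2 * pderivT ρ z * (∑ i, u z i ^ 2)
          + 1/2 * ρ z * (∑ i, 2 * u z i * pderivT (fun y => u y i) z))
        + c * (C' * (pderivT ρ z * θ z + ρ z * pderivT θ z)) := by
    have h0 : pdv (1, 0) (fun y => (1/2) * ρ y * ∑ i, (u y i)^2
        + (ε ^ 2)⁻¹ * PiH γ (ρ y * θ y)) z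
        = pdv (1, 0) (fun y => (1/2) * ρ y * ∑ i, (u y i)^2) z
          + pdv (1, 0) (fun y => (ε ^ 2)⁻¹ * PiH γ (ρ y * θ y)) z :=
      pdv_add ((hρd.const_mul (1/2)).mul hsumd) (hPiHd.const_mul _)
    have h1 : pdv (1, 0) (fun y => (1/2) * ρ y * ∑ i, (u y i)^2) z
        = (1/2 * ρ z) * pdv (1, 0) (fun y => ∑ i, (u y i)^2) z
          + (∑ i, u z i ^ 2) * pdv (1, 0) (fun y => 1/2 * ρ y) z :=
      pdv_mul (hρd.const_mul (1/2)) hsumd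
    have h2 : pdv (1, 0) (fun y => 1/2 * ρ y) z = 1/2 * pdv (1, 0) ρ z :=
      pdv_const_mul hρd _
    have h3 : pdv (1, 0) (fun y => (ε ^ 2)⁻¹ * PiH γ (ρ y * θ y)) z
        = (ε ^ 2)⁻¹ * pdv (1, 0) (fun y => PiH γ (ρ y * θ y)) z :=
      pdv_const_mul hPiHd _
    have h4 := hPiHexp (1, 0)
    have h5 := hsumexp (1, 0)
    show pdv (1, 0) _ z = _
    rw [h0, h1, h2, h3, h4, h5]
    show (1/2 * ρ z) * (∑ i, 2 * u z i * pdv (1,0) (fun y => u y i) z)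
        + (∑ i, u z i ^ 2) * (1/2 * pdv (1,0) ρ z)
        + (ε ^ 2)⁻¹ * (C' * (ρ z * pdv (1,0) θ z + θ z * pdv (1,0) ρ z))
      = (1/2 * pdv (1,0) ρ z * (∑ i, u z i ^ 2)
          + 1/2 * ρ z * (∑ i, 2 * u z i * pdv (1,0) (fun y => u y i) z))
        + c * (C' * (pdv (1,0) ρ z * θ z + ρ z * pdv (1,0) θ z))
    rw [hc]; ring
  -- expand the goal RHS divergence
  have eR : ∀ j ∈ Finset.univ, pderivX j (fun y => (1/2) * (ρ y * ((∑ i, (u y i)^2) * u y j))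
            + (ε ^ 2)⁻¹ * (PiH γ (ρ y * θ y) * (u y j - η * pderivX j Pf y))
            + (ε ^ 2)⁻¹ * (((ρ y * θ y) ^ γ - 1) * u y j)
            - η * ((ε ^ 2)⁻¹ * (((ρ y * θ y) ^ γ - 1) * pderivX j Pf y))) z
      = (1/2 * pderivX j ρ z * (∑ i, u z i ^ 2) * u z j
          + 1/2 * ρ z * ((∑ i, 2 * u z i * pderivX j (fun y => u y i) z) * u z j
            + (∑ i, u z i ^ 2) * pderivX j (fun y => u y j) z)
          + c * (C' * ((pderivX j ρ z * θ z + ρ z * pderivX j θ z)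
              * (u z j - η * pderivX j Pf z))
            + PiH γ (ρ z * θ z) * (pderivX j (fun y => u y j) z
              - η * pderivX j (fun y => pderivX j Pf y) z))
          + c * (pderivX j Pf z * u z j
            + ((ρ z * θ z) ^ γ - 1) * pderivX j (fun y => u y j) z)
          - η * c * (pderivX j Pf z * pderivX j Pf z
            + ((ρ z * θ z) ^ γ - 1) * pderivX j (fun y => pderivX j Pf y) z)) := by
    intro j _
    set w : ℝ × (Fin d → ℝ) := (0, Pi.single j 1) with hw
    have d1 : DifferentiableAt ℝ (fun y => (1/2) * (ρ y * ((∑ i, (u y i)^2) * u y j))) z :=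
      (hρd.mul (hsumd.mul (hud j))).const_mul _
    have d2 : DifferentiableAt ℝ
        (fun y => PiH γ (ρ y * θ y) * (u y j - η * pderivX j Pf y)) z :=
      hPiHd.mul (hvj j)
    have d2' : DifferentiableAt ℝ
        (fun y => (ε ^ 2)⁻¹ * (PiH γ (ρ y * θ y) * (u y j - η * pderivX j Pf y))) z :=
      d2.const_mul _
    have dP1 : DifferentiableAt ℝ (fun y => (ρ y * θ y) ^ γ - 1) z := hPd.sub_const 1
    have d3 : DifferentiableAt ℝ (fun y => ((ρ y * θ y) ^ γ - 1) * u y j) z :=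
      dP1.mul (hud j)
    have d3' : DifferentiableAt ℝ
        (fun y => (ε ^ 2)⁻¹ * (((ρ y * θ y) ^ γ - 1) * u y j)) z := d3.const_mul _
    have d4 : DifferentiableAt ℝ (fun y => ((ρ y * θ y) ^ γ - 1) * pderivX j Pf y) z :=
      dP1.mul (hPxd j)
    have d4' : DifferentiableAt ℝ
        (fun y => η * ((ε ^ 2)⁻¹ * (((ρ y * θ y) ^ γ - 1) * pderivX j Pf y))) z :=
      (d4.const_mul _).const_mul _
    have h0 : pdv w (fun y => (1/2) * (ρ y * ((∑ i, (u y i)^2) * u y j))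
            + (ε ^ 2)⁻¹ * (PiH γ (ρ y * θ y) * (u y j - η * pderivX j Pf y))
            + (ε ^ 2)⁻¹ * (((ρ y * θ y) ^ γ - 1) * u y j)
            - η * ((ε ^ 2)⁻¹ * (((ρ y * θ y) ^ γ - 1) * pderivX j Pf y))) z
        = (pdv w (fun y => (1/2) * (ρ y * ((∑ i, (u y i)^2) * u y j))) z
            + pdv w (fun y => (ε ^ 2)⁻¹ * (PiH γ (ρ y * θ y)
                * (u y j - η * pderivX j Pf y))) z
            + pdv w (fun y => (ε ^ 2)⁻¹ * (((ρ y * θ y) ^ γ - 1) * u y j)) z)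
          - pdv w (fun y => η * ((ε ^ 2)⁻¹
              * (((ρ y * θ y) ^ γ - 1) * pderivX j Pf y))) z := by
      rw [pdv_sub ((d1.fun_add d2').fun_add d3') d4', pdv_add (d1.fun_add d2') d3', pdv_add d1 d2']
    have h1 : pdv w (fun y => (1/2) * (ρ y * ((∑ i, (u y i)^2) * u y j))) z
        = (1/2 : ℝ) * (ρ z * ((∑ i, u z i ^ 2) * pdv w (fun y => u y j) z
            + u z j * pdv w (fun y => ∑ i, (u y i)^2) z)
          + ((∑ i, u z i ^ 2) * u z j) * pdv w ρ z) := by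
      rw [pdv_const_mul (hρd.fun_mul (hsumd.fun_mul (hud j))) _,
        pdv_mul hρd (hsumd.fun_mul (hud j)), pdv_mul hsumd (hud j)]
    have h2 : pdv w (fun y => (ε ^ 2)⁻¹ * (PiH γ (ρ y * θ y)
        * (u y j - η * pderivX j Pf y))) z
        = (ε ^ 2)⁻¹ * (PiH γ (ρ z * θ z) * (pdv w (fun y => u y j) z
              - η * pdv w (fun y => pderivX j Pf y) z)
            + (u z j - η * pderivX j Pf z)
              * (C' * (ρ z * pdv w θ z + θ z * pdv w ρ z))) := by
      rw [pdv_const_mul d2 _, pdv_mul hPiHd (hvj j),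
        pdv_sub (hud j) ((hPxd j).const_mul η), pdv_const_mul (hPxd j) η, hPiHexp w]
    have h3 : pdv w (fun y => (ε ^ 2)⁻¹ * (((ρ y * θ y) ^ γ - 1) * u y j)) z
        = (ε ^ 2)⁻¹ * (((ρ z * θ z) ^ γ - 1) * pdv w (fun y => u y j) z
            + u z j * pdv w Pf z) := by
      rw [pdv_const_mul d3 _, pdv_mul dP1 (hud j), pdv_sub_const hPd 1]
    have h4 : pdv w (fun y => η * ((ε ^ 2)⁻¹
        * (((ρ y * θ y) ^ γ - 1) * pderivX j Pf y))) z
        = η * ((ε ^ 2)⁻¹ * (((ρ z * θ z) ^ γ - 1) * pdv w (fun y => pderivX j Pf y) z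
            + pderivX j Pf z * pdv w Pf z)) := by
      rw [pdv_const_mul (d4.const_mul _) _, pdv_const_mul d4 _, pdv_mul dP1 (hPxd j),
        pdv_sub_const hPd 1]
    have h5 := hsumexp w
    show pdv w _ z = _
    rw [h0, h1, h2, h3, h4, h5]
    simp only [pderivX_eq_pdv, hw, hc]
    ring
  show _ = - diverg _ z - η * (ε ^ 2)⁻¹ * ∑ j, (pderivX j Pf z) ^ 2
  rw [eL, show diverg (fun y j => (1/2) * (ρ y * ((∑ i, (u y i)^2) * u y j))
            + (ε ^ 2)⁻¹ * (PiH γ (ρ y * θ y) * (u y j - η * pderivX j Pf y))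
            + (ε ^ 2)⁻¹ * (((ρ y * θ y) ^ γ - 1) * u y j)
            - η * ((ε ^ 2)⁻¹ * (((ρ y * θ y) ^ γ - 1) * pderivX j Pf y))) z
      = ∑ j, pderivX j (fun y => (1/2) * (ρ y * ((∑ i, (u y i)^2) * u y j))
            + (ε ^ 2)⁻¹ * (PiH γ (ρ y * θ y) * (u y j - η * pderivX j Pf y))
            + (ε ^ 2)⁻¹ * (((ρ y * θ y) ^ γ - 1) * u y j)
            - η * ((ε ^ 2)⁻¹ * (((ρ y * θ y) ^ γ - 1) * pderivX j Pf y))) z from rfl,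
    Finset.sum_congr rfl eR]
  rw [hc] at KEY
  beta_reduce at KEY
  exact KEY



lemma insertNth_one_eq {n : ℕ} (i : Fin (n + 1)) (x : Fin n → ℝ) :
    (i.insertNth (1 : ℝ) x : Fin (n + 1) → ℝ)
      = (i.insertNth (0 : ℝ) x : Fin (n + 1) → ℝ) + Pi.single i 1 := by
  funext j
  refine Fin.succAboveCases i ?_ ?_ j
  · simp
  · intro k
    simp [Fin.insertNth_apply_succAbove, Pi.single_apply,
      (Fin.succAbove_ne i k)]

lemma integral_diverg_zero {n : ℕ} (W : (Fin (n + 1) → ℝ) → Fin (n + 1) → ℝ)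
    (W' : (Fin (n + 1) → ℝ) → (Fin (n + 1) → ℝ) →L[ℝ] (Fin (n + 1) → ℝ))
    (hW : ∀ x, HasFDerivAt W (W' x) x)
    (hWc : ContinuousOn (fun x => ∑ i, W' x (Pi.single i 1) i) (Icc 0 1))
    (hper : ∀ (x : Fin (n + 1) → ℝ) (i : Fin (n + 1)), W (x + Pi.single i 1) = W x) :
    ∫ x in Icc (0 : Fin (n + 1) → ℝ) 1, ∑ i, W' x (Pi.single i 1) i = 0 := by
  have hle : (0 : Fin (n + 1) → ℝ) ≤ 1 := fun i => zero_le_one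
  have hcont : ContinuousOn W (Icc 0 1) :=
    (Differentiable.continuous fun x => (hW x).differentiableAt).continuousOn
  have key := MeasureTheory.integral_divergence_of_hasFDerivAt_off_countable
    (0 : Fin (n + 1) → ℝ) 1 hle W W' ∅ countable_empty hcont
    (fun x _ => hW x) (hWc.integrableOn_compact isCompact_Icc)
  rw [key]
  refine Finset.sum_eq_zero fun i _ => ?_
  have : ∀ x : Fin n → ℝ, W (i.insertNth ((1 : Fin (n+1) → ℝ) i) x) i
      = W (i.insertNth ((0 : Fin (n+1) → ℝ) i) x) i := by
    intro x
    have h0 : ((1 : Fin (n+1) → ℝ) i) = (1:ℝ) := rfl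
    have h1 : ((0 : Fin (n+1) → ℝ) i) = (0:ℝ) := rfl
    rw [h0, h1, insertNth_one_eq, hper]
  rw [sub_eq_zero]
  exact setIntegral_congr_fun measurableSet_Icc (fun x _ => this x)

lemma fderiv_translation {d : ℕ} (f : ℝ × (Fin d → ℝ) → ℝ) (cvec : ℝ × (Fin d → ℝ))
    (hf : ∀ y, f (y + cvec) = f y) (z : ℝ × (Fin d → ℝ))
    (hd : DifferentiableAt ℝ f (z + cvec)) :
    fderiv ℝ f z = fderiv ℝ f (z + cvec) := by
  have h1 : HasFDerivAt (fun y => f (y + cvec))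
      ((fderiv ℝ f (z + cvec)).comp (ContinuousLinearMap.id ℝ _)) z :=
    hd.hasFDerivAt.comp z ((hasFDerivAt_id z).add_const cvec)
  rw [ContinuousLinearMap.comp_id] at h1
  rw [funext hf] at h1
  exact h1.fderiv

theorem total_energy_nonincreasing_periodic
    (d : ℕ) (hd : 1 ≤ d) (T ε γ η : ℝ) (hT : 0 < T) (hε : 0 < ε) (hγ : 1 < γ) (hη : 0 ≤ η)
    (ρ θ : ℝ × (Fin d → ℝ) → ℝ) (u : ℝ × (Fin d → ℝ) → Fin d → ℝ)
    (hρ : ContDiffOn ℝ 1 ρ (Ioo (0:ℝ) T ×ˢ (univ : Set (Fin d → ℝ))))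
    (hθ : ContDiffOn ℝ 1 θ (Ioo (0:ℝ) T ×ˢ (univ : Set (Fin d → ℝ))))
    (hu : ContDiffOn ℝ 1 u (Ioo (0:ℝ) T ×ˢ (univ : Set (Fin d → ℝ))))
    (hp : ContDiffOn ℝ 2 (fun y => (ρ y * θ y) ^ γ) (Ioo (0:ℝ) T ×ˢ (univ : Set (Fin d → ℝ))))
    (hρper : ∀ (t : ℝ) (x : Fin d → ℝ) (k : Fin d → ℤ),
      ρ (t, x + fun i => (k i : ℝ)) = ρ (t, x))
    (hθper : ∀ (t : ℝ) (x : Fin d → ℝ) (k : Fin d → ℤ),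
      θ (t, x + fun i => (k i : ℝ)) = θ (t, x))
    (huper : ∀ (t : ℝ) (x : Fin d → ℝ) (k : Fin d → ℤ),
      u (t, x + fun i => (k i : ℝ)) = u (t, x))
    (hρpos : ∀ z ∈ Ioo (0:ℝ) T ×ˢ (univ : Set (Fin d → ℝ)), 0 < ρ z)
    (hθpos : ∀ z ∈ Ioo (0:ℝ) T ×ˢ (univ : Set (Fin d → ℝ)), 0 < θ z)
    (hmass : ∀ z ∈ Ioo (0:ℝ) T ×ˢ (univ : Set (Fin d → ℝ)),
      pderivT ρ z + diverg (fun y i => ρ y * u y i) z = 0)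
    (hmom : ∀ z ∈ Ioo (0:ℝ) T ×ˢ (univ : Set (Fin d → ℝ)), ∀ i : Fin d,
      pderivT (fun y => ρ y * u y i) z + diverg (fun y j => ρ y * u y i * u y j) z
        + (ε ^ 2)⁻¹ * pderivX i (fun y => (ρ y * θ y) ^ γ) z = 0)
    (htemp : ∀ z ∈ Ioo (0:ℝ) T ×ˢ (univ : Set (Fin d → ℝ)),
      pderivT (fun y => ρ y * θ y) z
        + diverg (fun y i => ρ y * θ y
            * (u y i - η * pderivX i (fun y' => (ρ y' * θ y') ^ γ) y)) z = 0) :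
    ∀ t₁ ∈ Ioo (0:ℝ) T, ∀ t₂ ∈ Ioo (0:ℝ) T, t₁ ≤ t₂ →
      (∫ x in Icc (0 : Fin d → ℝ) 1,
        ((1 / 2) * ρ (t₂, x) * ∑ i, (u (t₂, x) i) ^ 2
          + (ε ^ 2)⁻¹ * PiH γ (ρ (t₂, x) * θ (t₂, x))))
      ≤ ∫ x in Icc (0 : Fin d → ℝ) 1,
        ((1 / 2) * ρ (t₁, x) * ∑ i, (u (t₁, x) i) ^ 2
          + (ε ^ 2)⁻¹ * PiH γ (ρ (t₁, x) * θ (t₁, x))) := by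
  obtain ⟨n, rfl⟩ : ∃ n, d = n + 1 := ⟨d - 1, (Nat.succ_pred_eq_of_pos hd).symm⟩
  intro t₁ ht₁ t₂ ht₂ ht12
  set Q : Set (ℝ × (Fin (n + 1) → ℝ)) := Ioo (0:ℝ) T ×ˢ (univ : Set (Fin (n+1) → ℝ)) with hQdef
  have hQo : IsOpen Q := isOpen_Ioo.prod isOpen_univ
  have hmemQ : ∀ {t : ℝ}, t ∈ Ioo (0:ℝ) T → ∀ (x : Fin (n+1) → ℝ), (t, x) ∈ Q :=
    fun ht x => ⟨ht, mem_univ x⟩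
  -- the energy density and flux
  set ef : ℝ × (Fin (n+1) → ℝ) → ℝ := fun y =>
    (1/2) * ρ y * ∑ i, (u y i)^2 + (ε ^ 2)⁻¹ * PiH γ (ρ y * θ y) with hefdef
  set Wf : ℝ × (Fin (n+1) → ℝ) → Fin (n+1) → ℝ := fun y j =>
    (1/2) * (ρ y * ((∑ i, (u y i)^2) * u y j))
      + (ε ^ 2)⁻¹ * (PiH γ (ρ y * θ y)
          * (u y j - η * pderivX j (fun y' => (ρ y' * θ y') ^ γ) y))
      + (ε ^ 2)⁻¹ * (((ρ y * θ y) ^ γ - 1) * u y j)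
      - η * ((ε ^ 2)⁻¹ * (((ρ y * θ y) ^ γ - 1)
          * pderivX j (fun y' => (ρ y' * θ y') ^ γ) y)) with hWfdef
  -- regularity
  have hdAt : ∀ (f : ℝ × (Fin (n+1) → ℝ) → ℝ), ContDiffOn ℝ 1 f Q →
      ∀ z ∈ Q, DifferentiableAt ℝ f z := fun f hf z hz =>
    (hf.differentiableOn one_ne_zero).differentiableAt (hQo.mem_nhds hz)
  have hui : ∀ i, ContDiffOn ℝ 1 (fun y => u y i) Q := fun i =>
    (ContinuousLinearMap.proj (R := ℝ) (φ := fun _ : Fin (n+1) => ℝ) i).contDiff.comp_contDiffOn hu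
  have hp1 : ContDiffOn ℝ 1 (fun y => (ρ y * θ y) ^ γ) Q := hp.of_le one_le_two
  have hPx1 : ∀ j, ContDiffOn ℝ 1
      (fun y => pderivX j (fun y' => (ρ y' * θ y') ^ γ) y) Q := by
    intro j
    have h2 : ContDiffOn ℝ 1 (fderiv ℝ (fun y' => (ρ y' * θ y') ^ γ)) Q :=
      hp.fderiv_of_isOpen hQo le_rfl
    exact (ContinuousLinearMap.apply ℝ ℝ
      ((0, Pi.single j 1) : ℝ × (Fin (n+1) → ℝ))).contDiff.comp_contDiffOn h2
  have hsum1 : ContDiffOn ℝ 1 (fun y => ∑ i, (u y i)^2) Q :=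
    ContDiffOn.sum fun i _ => (hui i).pow 2
  have hPiHq : ContDiffOn ℝ 1 (fun y => PiH γ (ρ y * θ y)) Q := by
    have : (fun y => PiH γ (ρ y * θ y)) = fun y =>
        ((ρ y * θ y) ^ γ) / (γ - 1) - psiH γ 1 - psiH' γ 1 * ((ρ y * θ y) - 1) := rfl
    rw [this]
    exact ((hp1.div_const _).sub contDiffOn_const).sub
      (contDiffOn_const.mul ((hρ.mul hθ).sub contDiffOn_const))
  have hef1 : ContDiffOn ℝ 1 ef Q :=
    ((contDiffOn_const.mul hρ).mul hsum1).add (contDiffOn_const.mul hPiHq)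
  have hWj1 : ∀ j, ContDiffOn ℝ 1 (fun y => Wf y j) Q := by
    intro j
    refine ContDiffOn.sub (ContDiffOn.add (ContDiffOn.add ?_ ?_) ?_) ?_
    · exact contDiffOn_const.mul (hρ.mul (hsum1.mul (hui j)))
    · exact contDiffOn_const.mul
        (hPiHq.mul ((hui j).sub (contDiffOn_const.mul (hPx1 j))))
    · exact contDiffOn_const.mul ((hp1.sub contDiffOn_const).mul (hui j))
    · exact contDiffOn_const.mul
        (contDiffOn_const.mul ((hp1.sub contDiffOn_const).mul (hPx1 j)))
  -- continuity of the relevant derivative quantities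
  have hgc : ContinuousOn (pderivT ef) Q := by
    have h2 : ContinuousOn (fderiv ℝ ef) Q :=
      hef1.continuousOn_fderiv_of_isOpen hQo le_rfl
    exact (ContinuousLinearMap.apply ℝ ℝ
      ((1, 0) : ℝ × (Fin (n+1) → ℝ))).continuous.comp_continuousOn h2
  have hdWc : ContinuousOn (diverg Wf) Q := by
    refine continuousOn_finset_sum _ fun j _ => ?_
    have h2 : ContinuousOn (fderiv ℝ (fun y => Wf y j)) Q :=
      (hWj1 j).continuousOn_fderiv_of_isOpen hQo le_rfl
    exact (ContinuousLinearMap.apply ℝ ℝ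
      ((0, Pi.single j 1) : ℝ × (Fin (n+1) → ℝ))).continuous.comp_continuousOn h2
  -- the pointwise energy identity
  have hptw : ∀ z ∈ Q, pderivT ef z
      = - diverg Wf z - η * (ε ^ 2)⁻¹
          * ∑ j, (pderivX j (fun y' => (ρ y' * θ y') ^ γ) z) ^ 2 := by
    intro z hz
    exact pointwise_identity ε γ η hγ ρ θ u z
      (hdAt ρ hρ z hz) (hdAt θ hθ z hz) (fun i => hdAt _ (hui i) z hz)
      (fun j => hdAt _ (hPx1 j) z hz) (hρpos z hz) (hθpos z hz)
      (hmass z hz) (fun i => hmom z hz i) (htemp z hz)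
  -- periodicity
  have hcast : ∀ i : Fin (n+1),
      (fun j => ((Pi.single i (1:ℤ) : Fin (n+1) → ℤ) j : ℝ)) = Pi.single i (1:ℝ) := by
    intro i; funext j
    rcases eq_or_ne j i with h | h <;> simp [Pi.single_apply, h]
  have hPfper : ∀ (y : ℝ × (Fin (n+1) → ℝ)) (k : Fin (n+1) → ℤ),
      (fun y' => (ρ y' * θ y') ^ γ) (y + ((0:ℝ), fun i => (k i : ℝ)))
        = (fun y' => (ρ y' * θ y') ^ γ) y := by
    intro y k
    have hy : y + ((0:ℝ), fun i => (k i : ℝ)) = (y.1, y.2 + fun i => (k i : ℝ)) := by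
      ext <;> simp
    simp only [hy]
    have h1 := hρper y.1 y.2 k
    have h2 := hθper y.1 y.2 k
    simp only [h1, h2]
  have hPxper : ∀ (j : Fin (n+1)) (t : ℝ), t ∈ Ioo (0:ℝ) T → ∀ (x : Fin (n+1) → ℝ)
      (k : Fin (n+1) → ℤ),
      pderivX j (fun y' => (ρ y' * θ y') ^ γ) (t, x + fun i => (k i : ℝ))
        = pderivX j (fun y' => (ρ y' * θ y') ^ γ) (t, x) := by
    intro j t htQ x k
    have hpt : ((t, x) : ℝ × (Fin (n+1) → ℝ)) + ((0:ℝ), fun i => (k i : ℝ))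
        = (t, x + fun i => (k i : ℝ)) := by ext <;> simp
    have hdiff : DifferentiableAt ℝ (fun y' => (ρ y' * θ y') ^ γ)
        (((t, x) : ℝ × (Fin (n+1) → ℝ)) + ((0:ℝ), fun i => (k i : ℝ))) := by
      rw [hpt]; exact hdAt _ hp1 _ (hmemQ htQ _)
    have := fderiv_translation (fun y' => (ρ y' * θ y') ^ γ)
      ((0:ℝ), fun i => (k i : ℝ)) (fun y => hPfper y k) (t, x) hdiff
    rw [hpt] at this
    show fderiv ℝ _ _ _ = fderiv ℝ _ _ _
    rw [← this]
  have hWfper : ∀ (t : ℝ), t ∈ Ioo (0:ℝ) T → ∀ (x : Fin (n+1) → ℝ) (i : Fin (n+1)),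
      Wf (t, x + Pi.single i 1) = Wf (t, x) := by
    intro t htQ x i
    funext j
    have hxk : x + Pi.single i (1:ℝ) = x + fun j' => ((Pi.single i (1:ℤ) : Fin (n+1) → ℤ) j' : ℝ) := by
      rw [hcast i]
    rw [hWfdef]
    simp only [hxk]
    rw [hρper t x (Pi.single i (1:ℤ)), hθper t x (Pi.single i (1:ℤ)),
      huper t x (Pi.single i (1:ℤ)), hPxper j t htQ x (Pi.single i (1:ℤ))]
  -- the integral of the divergence vanishes
  have hdiv0 : ∀ s ∈ Ioo (0:ℝ) T,
      ∫ x in Icc (0 : Fin (n+1) → ℝ) 1, diverg Wf (s, x) = 0 := by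
    intro s hs
    set W : (Fin (n+1) → ℝ) → Fin (n+1) → ℝ := fun x => Wf (s, x) with hWdef
    set W' : (Fin (n+1) → ℝ) → (Fin (n+1) → ℝ) →L[ℝ] (Fin (n+1) → ℝ) := fun x =>
      ContinuousLinearMap.pi (fun j => (fderiv ℝ (fun y => Wf y j) (s, x)).comp
        (ContinuousLinearMap.inr ℝ ℝ (Fin (n+1) → ℝ))) with hW'def
    have hW : ∀ x, HasFDerivAt W (W' x) x := by
      intro x
      apply hasFDerivAt_pi.2
      intro j
      have hdj : DifferentiableAt ℝ (fun y => Wf y j) (s, x) :=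
        hdAt _ (hWj1 j) _ (hmemQ hs x)
      have hpair : HasFDerivAt (fun x' : Fin (n+1) → ℝ => ((s, x') : ℝ × (Fin (n+1) → ℝ)))
          (ContinuousLinearMap.inr ℝ ℝ (Fin (n+1) → ℝ)) x := hasFDerivAt_prodMk_right s x
      exact hdj.hasFDerivAt.comp x hpair
    have hdiveq : (fun x => ∑ i, W' x (Pi.single i 1) i) = fun x => diverg Wf (s, x) := rfl
    have hWc : ContinuousOn (fun x => ∑ i, W' x (Pi.single i 1) i)
        (Icc (0 : Fin (n+1) → ℝ) 1) := by
      rw [hdiveq]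
      exact hdWc.comp (Continuous.prodMk_right s).continuousOn (fun x _ => hmemQ hs x)
    have hper : ∀ (x : Fin (n+1) → ℝ) (i : Fin (n+1)), W (x + Pi.single i 1) = W x :=
      fun x i => hWfper s hs x i
    have key := integral_diverg_zero W W' hW hWc hper
    rw [hdiveq] at key
    exact key
  -- Integrability of the energy density at fixed times
  have hIe : ∀ t ∈ Ioo (0:ℝ) T, IntegrableOn (fun x => ef (t, x))
      (Icc (0 : Fin (n+1) → ℝ) 1) volume := by
    intro t htm
    exact (hef1.continuousOn.comp (Continuous.prodMk_right t).continuousOn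
      (fun x _ => hmemQ htm x)).integrableOn_compact isCompact_Icc
  have hIcc1 : Icc t₁ t₂ ⊆ Ioo (0:ℝ) T :=
    fun s hs => ⟨lt_of_lt_of_le ht₁.1 hs.1, lt_of_le_of_lt hs.2 ht₂.2⟩
  -- FTC in time
  have hftc : ∀ x : Fin (n+1) → ℝ, ef (t₂, x) - ef (t₁, x)
      = ∫ s in Ioc t₁ t₂, pderivT ef (s, x) := by
    intro x
    have h1 : ∀ s ∈ uIcc t₁ t₂, HasDerivAt (fun s' => ef (s', x)) (pderivT ef (s, x)) s := by
      intro s hs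
      rw [uIcc_of_le ht12] at hs
      have hdef : DifferentiableAt ℝ ef (s, x) := hdAt ef hef1 _ (hmemQ (hIcc1 hs) x)
      have hpair : HasDerivAt (fun s' : ℝ => ((s', x) : ℝ × (Fin (n+1) → ℝ)))
          ((1:ℝ), (0 : Fin (n+1) → ℝ)) s := (hasDerivAt_id s).prodMk (hasDerivAt_const s x)
      exact hdef.hasFDerivAt.comp_hasDerivAt s hpair
    have h2 : IntervalIntegrable (fun s => pderivT ef (s, x)) volume t₁ t₂ := by
      apply ContinuousOn.intervalIntegrable
      apply hgc.comp (Continuous.continuousOn (continuous_id.prodMk continuous_const))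
      intro s hs
      rw [uIcc_of_le ht12] at hs
      exact hmemQ (hIcc1 hs) x
    rw [← intervalIntegral.integral_of_le ht12]
    exact (intervalIntegral.integral_eq_sub_of_hasDerivAt h1 h2).symm
  -- swap integrals
  have hcontg2 : ContinuousOn (Function.uncurry fun (x : Fin (n+1) → ℝ) (s : ℝ) =>
      pderivT ef (s, x)) ((Icc (0 : Fin (n+1) → ℝ) 1) ×ˢ (Icc t₁ t₂)) := by
    have hrw : (Function.uncurry fun (x : Fin (n+1) → ℝ) (s : ℝ) => pderivT ef (s, x))
        = (pderivT ef) ∘ Prod.swap := rfl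
    rw [hrw]
    exact hgc.comp continuous_swap.continuousOn (fun q hq => hmemQ (hIcc1 hq.2) q.1)
  have hint2 : Integrable (Function.uncurry fun (x : Fin (n+1) → ℝ) (s : ℝ) =>
      pderivT ef (s, x))
      ((volume.restrict (Icc (0 : Fin (n+1) → ℝ) 1)).prod (volume.restrict (Ioc t₁ t₂))) := by
    rw [Measure.prod_restrict, ← Measure.volume_eq_prod]
    exact (hcontg2.integrableOn_compact (isCompact_Icc.prod isCompact_Icc)).mono_set
      (prod_mono subset_rfl Ioc_subset_Icc_self)
  have hswap := MeasureTheory.integral_integral_swap hint2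
  -- nonpositivity of the inner integral
  have hnonpos : ∫ s in Ioc t₁ t₂,
      (∫ x in Icc (0 : Fin (n+1) → ℝ) 1, pderivT ef (s, x)) ≤ 0 := by
    apply setIntegral_nonpos measurableSet_Ioc
    intro s hs
    have hsT : s ∈ Ioo (0:ℝ) T := hIcc1 ⟨le_of_lt hs.1, hs.2⟩
    have hIdiv : IntegrableOn (fun x => diverg Wf (s, x))
        (Icc (0 : Fin (n+1) → ℝ) 1) volume :=
      (hdWc.comp (Continuous.prodMk_right s).continuousOn
        (fun x _ => hmemQ hsT x)).integrableOn_compact isCompact_Icc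
    have hIh : IntegrableOn (fun x => η * (ε ^ 2)⁻¹
        * ∑ j, (pderivX j (fun y' => (ρ y' * θ y') ^ γ) (s, x)) ^ 2)
        (Icc (0 : Fin (n+1) → ℝ) 1) volume := by
      have hconth : ContinuousOn (fun x : Fin (n+1) → ℝ => η * (ε ^ 2)⁻¹
          * ∑ j, (pderivX j (fun y' => (ρ y' * θ y') ^ γ) (s, x)) ^ 2)
          (Icc (0 : Fin (n+1) → ℝ) 1) :=
        continuousOn_const.mul (continuousOn_finset_sum _ fun j _ =>
          (((hPx1 j).continuousOn.comp (Continuous.prodMk_right s).continuousOn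
            (fun x _ => hmemQ hsT x)).pow 2))
      exact hconth.integrableOn_compact isCompact_Icc
    have hcongr : (∫ x in Icc (0 : Fin (n+1) → ℝ) 1, pderivT ef (s, x))
        = ∫ x in Icc (0 : Fin (n+1) → ℝ) 1, (- diverg Wf (s, x) - η * (ε ^ 2)⁻¹
            * ∑ j, (pderivX j (fun y' => (ρ y' * θ y') ^ γ) (s, x)) ^ 2) :=
      setIntegral_congr_fun measurableSet_Icc (fun x _ => hptw (s, x) (hmemQ hsT x))
    have hIdivn : IntegrableOn (fun x => - diverg Wf (s, x))
        (Icc (0 : Fin (n+1) → ℝ) 1) volume := hIdiv.neg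
    rw [hcongr, integral_sub hIdivn hIh, integral_neg, hdiv0 s hsT, neg_zero, zero_sub,
      neg_nonpos]
    apply setIntegral_nonneg measurableSet_Icc
    intro x _
    have h1 : (0:ℝ) ≤ ∑ j, (pderivX j (fun y' => (ρ y' * θ y') ^ γ) (s, x)) ^ 2 :=
      Finset.sum_nonneg fun j _ => sq_nonneg _
    positivity
  -- final computation
  show (∫ x in Icc (0 : Fin (n+1) → ℝ) 1, ef (t₂, x))
    ≤ ∫ x in Icc (0 : Fin (n+1) → ℝ) 1, ef (t₁, x)
  rw [← sub_nonpos, ← integral_sub (hIe t₂ ht₂) (hIe t₁ ht₁)]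
  calc ∫ x in Icc (0 : Fin (n+1) → ℝ) 1, (ef (t₂, x) - ef (t₁, x))
      = ∫ x in Icc (0 : Fin (n+1) → ℝ) 1, ∫ s in Ioc t₁ t₂, pderivT ef (s, x) :=
        setIntegral_congr_fun measurableSet_Icc (fun x _ => hftc x)
    _ = ∫ s in Ioc t₁ t₂, ∫ x in Icc (0 : Fin (n+1) → ℝ) 1, pderivT ef (s, x) := hswap
    _ ≤ 0 := hnonpos
end

section
/- Let γ > 1, let (Ω, μ) be a measure space with μ(Ω) < ∞, and let r ∈ [1, min{2, γ}]. Let (f^ε)_{ε > 0} be a family of measurable functions f^ε : Ω → [0, ∞) and C > 0 a constant such that ∫_Ω Π_γ(f^ε) dμ ≤ C ε² for all ε > 0. Then ‖f^ε − 1‖_{L^r(Ω)} → 0 as ε → 0; that is, f^ε converges to the constant function 1 in L^r(Ω). -/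
open Set MeasureTheory Filter
open scoped ENNReal NNReal

/-- The relative internal energy `Π_γ(z) = (z^γ - 1 - γ (z - 1)) / (γ - 1)`. -/
noncomputable def PiFn (γ : ℝ) (z : ℝ) : ℝ := (z ^ γ - 1 - γ * (z - 1)) / (γ - 1)

universe u

lemma PiFn_nonneg {γ z : ℝ} (hγ : 1 < γ) (hz : 0 ≤ z) : 0 ≤ PiFn γ z := by
  have h := one_add_mul_self_le_rpow_one_add (s := z - 1) (by linarith) hγ.le
  have h1 : (1 : ℝ) + (z - 1) = z := by ring
  rw [h1] at h
  have : (0 : ℝ) ≤ z ^ γ - 1 - γ * (z - 1) := by linarith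
  exact div_nonneg this (by linarith)

lemma PiFn_pos {γ z : ℝ} (hγ : 1 < γ) (hz : 0 ≤ z) (hne : z ≠ 1) : 0 < PiFn γ z := by
  have h := one_add_mul_self_lt_rpow_one_add (s := z - 1) (by linarith)
    (by intro h; exact hne (by linarith)) hγ
  have h1 : (1 : ℝ) + (z - 1) = z := by ring
  rw [h1] at h
  have : (0 : ℝ) < z ^ γ - 1 - γ * (z - 1) := by linarith
  exact div_pos this (by linarith)

lemma PiFn_continuous {γ : ℝ} (hγ : 1 < γ) : Continuous (PiFn γ) := by
  unfold PiFn
  exact ((Real.continuous_rpow_const (by linarith)).sub continuous_const |>.sub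
    (continuous_const.mul (continuous_id.sub continuous_const))).div_const _

/-- Key pointwise inequality. -/
lemma key_pointwise {γ r : ℝ} (hγ : 1 < γ) (hr1 : 1 ≤ r) (hrγ : r ≤ γ)
    {η : ℝ} (hη : 0 < η) (hη1 : η ≤ 1) :
    ∃ K : ℝ, 0 < K ∧ ∀ z : ℝ, 0 ≤ z → |z - 1| ^ r ≤ η ^ r + K * PiFn γ z := by
  set M : ℝ := max 2 ((2 * γ) ^ (γ - 1)⁻¹) with hM
  have hM2 : (2 : ℝ) ≤ M := le_max_left _ _
  have hMpos : (0 : ℝ) < M := by linarith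
  set S : Set ℝ := Icc 0 M ∩ {z | η ≤ |z - 1|} with hS
  have hScomp : IsCompact S := by
    apply isCompact_Icc.inter_right
    have : {z : ℝ | η ≤ |z - 1|} = (fun z : ℝ => |z - 1|) ⁻¹' Ici η := rfl
    rw [this]
    exact IsClosed.preimage (by continuity) isClosed_Ici
  have hSne : S.Nonempty := by
    refine ⟨0, ⟨le_refl _, by linarith⟩, ?_⟩
    simp only [mem_setOf_eq]
    rw [show |(0 : ℝ) - 1| = 1 by norm_num]
    exact hη1
  obtain ⟨z₀, hz₀S, hz₀min⟩ := hScomp.exists_isMinOn hSne (PiFn_continuous hγ).continuousOn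
  set m : ℝ := PiFn γ z₀ with hm
  have hz₀ne : z₀ ≠ 1 := by
    intro h
    have := hz₀S.2
    simp only [mem_setOf_eq, h] at this
    rw [show |(1 : ℝ) - 1| = 0 by norm_num] at this
    linarith
  have hmpos : 0 < m := PiFn_pos hγ hz₀S.1.1 hz₀ne
  refine ⟨max (M ^ r / m) (2 * (γ - 1)), ?_, ?_⟩
  · exact lt_max_of_lt_right (by linarith)
  intro z hz
  set K := max (M ^ r / m) (2 * (γ - 1)) with hK
  have hKpos : 0 < K := lt_max_of_lt_right (by linarith)
  have hPin : 0 ≤ PiFn γ z := PiFn_nonneg hγ hz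
  rcases le_or_gt |z - 1| η with hcase | hcase
  · have h1 : |z - 1| ^ r ≤ η ^ r := Real.rpow_le_rpow (abs_nonneg _) hcase (by linarith)
    nlinarith [mul_nonneg hKpos.le hPin]
  rcases le_or_gt z M with hzM | hzM
  · -- z ∈ S
    have hzS : z ∈ S := ⟨⟨hz, hzM⟩, hcase.le⟩
    have hmz : m ≤ PiFn γ z := hz₀min hzS
    have habs : |z - 1| ≤ M := by
      rw [abs_le]; constructor <;> nlinarith
    have h1 : |z - 1| ^ r ≤ M ^ r := Real.rpow_le_rpow (abs_nonneg _) habs (by linarith)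
    have h2 : M ^ r ≤ K * PiFn γ z := by
      have : M ^ r = M ^ r / m * m := by field_simp
      rw [this]
      have hMr : 0 ≤ M ^ r / m := div_nonneg (Real.rpow_nonneg hMpos.le r) hmpos.le
      exact mul_le_mul (le_max_left _ _) hmz hmpos.le hKpos.le
    have hηr : 0 ≤ η ^ r := Real.rpow_nonneg hη.le r
    linarith
  · -- z large
    have hz2 : (2 : ℝ) ≤ z := le_trans hM2 hzM.le
    have hz1 : (1 : ℝ) ≤ z := by linarith
    have hzpos : (0 : ℝ) < z := by linarith
    have hstep : 2 * γ ≤ z ^ (γ - 1) := by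
      have hb : (2 * γ) ^ (γ - 1)⁻¹ ≤ z := le_trans (le_max_right _ _) hzM.le
      have h := Real.rpow_le_rpow (Real.rpow_nonneg (by linarith) _) hb (by linarith : (0:ℝ) ≤ γ - 1)
      rwa [← Real.rpow_mul (by linarith : (0:ℝ) ≤ 2*γ),
        inv_mul_cancel₀ (by linarith : γ - 1 ≠ 0), Real.rpow_one] at h
    have hmul : γ * z ≤ z ^ γ / 2 := by
      have h1 : z ^ (γ - 1) * z = z ^ γ := by
        have h2 := Real.rpow_add hzpos (γ - 1) 1
        rw [Real.rpow_one, show γ - 1 + 1 = γ by ring] at h2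
        exact h2.symm
      nlinarith
    have hnum : z ^ γ / 2 ≤ z ^ γ - 1 - γ * (z - 1) := by nlinarith
    have habs : |z - 1| ^ r ≤ z ^ γ := by
      rw [abs_of_nonneg (by linarith : (0:ℝ) ≤ z - 1)]
      calc (z - 1) ^ r ≤ z ^ r := Real.rpow_le_rpow (by linarith) (by linarith) (by linarith)
        _ ≤ z ^ γ := Real.rpow_le_rpow_of_exponent_le hz1 hrγ
    have hPiz : z ^ γ ≤ 2 * (γ - 1) * PiFn γ z := by
      have : (γ - 1) * PiFn γ z = z ^ γ - 1 - γ * (z - 1) := by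
        unfold PiFn
        rw [mul_comm]
        exact div_mul_cancel₀ _ (by linarith : γ - 1 ≠ 0)
      nlinarith
    have hηr : 0 ≤ η ^ r := Real.rpow_nonneg hη.le r
    have : 2 * (γ - 1) * PiFn γ z ≤ K * PiFn γ z :=
      mul_le_mul_of_nonneg_right (le_max_right _ _) hPin
    linarith

theorem Lr_convergence_to_one (γ : ℝ) (hγ : 1 < γ)
    (Ω : Type u) [MeasurableSpace Ω] (μ : Measure Ω) [IsFiniteMeasure μ]
    (r : ℝ) (hr : r ∈ Icc (1:ℝ) (min 2 γ))
    (f : ℝ → Ω → ℝ) (C : ℝ) (hC : 0 < C)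
    (hmeas : ∀ ε : ℝ, 0 < ε → Measurable (f ε))
    (hnn : ∀ ε : ℝ, 0 < ε → ∀ x, 0 ≤ f ε x)
    (hbd : ∀ ε : ℝ, 0 < ε →
      (∫⁻ x, ENNReal.ofReal (PiFn γ (f ε x)) ∂μ) ≤ ENNReal.ofReal (C * ε ^ 2)) :
    Tendsto (fun ε : ℝ => eLpNorm (fun x => f ε x - 1) (ENNReal.ofReal r) μ)
      (nhdsWithin 0 (Ioi 0)) (nhds 0) := by
  obtain ⟨hr1, hrm⟩ := hr
  have hrγ : r ≤ γ := le_trans hrm (min_le_right _ _)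
  have hr0 : 0 < r := by linarith
  have hp0 : ENNReal.ofReal r ≠ 0 := (ENNReal.ofReal_pos.mpr hr0).ne'
  have hptop : ENNReal.ofReal r ≠ ⊤ := ENNReal.ofReal_ne_top
  rw [ENNReal.tendsto_nhds_zero]
  intro a ha
  -- choose a real b with 0 < b and ofReal b ≤ a
  set b : ℝ := (min 1 a).toReal with hbdef
  have hmin_ne_top : min 1 a ≠ ⊤ := ne_top_of_le_ne_top ENNReal.one_ne_top (min_le_left _ _)
  have hb : 0 < b := ENNReal.toReal_pos (lt_min zero_lt_one ha).ne' hmin_ne_top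
  have hba : ENNReal.ofReal b ≤ a := by
    rw [hbdef, ENNReal.ofReal_toReal hmin_ne_top]
    exact min_le_right _ _
  have hbr : 0 < b ^ r := Real.rpow_pos_of_pos hb r
  set T : ℝ := (μ Set.univ).toReal with hT
  have hT0 : 0 ≤ T := ENNReal.toReal_nonneg
  -- choose η
  set η : ℝ := min 1 (b ^ r / (2 * (T + 1))) with hηdef
  have hη : 0 < η := lt_min one_pos (by positivity)
  have hη1 : η ≤ 1 := min_le_left _ _
  have hηT : η ^ r * T ≤ b ^ r / 2 := by
    have h1 : η ^ r ≤ η := by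
      calc η ^ r ≤ η ^ (1:ℝ) := Real.rpow_le_rpow_of_exponent_ge hη hη1 hr1
        _ = η := Real.rpow_one η
    have h2 : η ≤ b ^ r / (2 * (T + 1)) := min_le_right _ _
    have h3 : η ^ r * T ≤ η * (T + 1) := by
      have : 0 ≤ η ^ r := Real.rpow_nonneg hη.le r
      nlinarith
    have h4 : η * (T + 1) ≤ b ^ r / (2 * (T + 1)) * (T + 1) :=
      mul_le_mul_of_nonneg_right h2 (by linarith)
    have h5 : b ^ r / (2 * (T + 1)) * (T + 1) = b ^ r / 2 := by
      field_simp
    linarith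
  obtain ⟨K, hK, hkey⟩ := key_pointwise hγ hr1 hrγ hη hη1
  set ε₀ : ℝ := Real.sqrt (b ^ r / (2 * K * C)) with hε₀def
  have hε₀ : 0 < ε₀ := Real.sqrt_pos.mpr (by positivity)
  have hmem : Ioo (0:ℝ) ε₀ ∈ nhdsWithin (0:ℝ) (Ioi 0) :=
    Ioo_mem_nhdsGT_of_mem ⟨le_refl _, hε₀⟩
  filter_upwards [hmem] with ε hε
  obtain ⟨hε0, hεlt⟩ := hε
  have hKC : K * C * ε ^ 2 ≤ b ^ r / 2 := by
    have hsq : ε ^ 2 ≤ ε₀ ^ 2 := by nlinarith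
    have hε₀sq : ε₀ ^ 2 = b ^ r / (2 * K * C) := Real.sq_sqrt (by positivity)
    rw [hε₀sq] at hsq
    have := mul_le_mul_of_nonneg_left hsq (by positivity : (0:ℝ) ≤ K * C)
    have heq : K * C * (b ^ r / (2 * K * C)) = b ^ r / 2 := by
      field_simp
    linarith [heq ▸ this]
  -- main estimate
  rw [eLpNorm_eq_lintegral_rpow_enorm_toReal hp0 hptop, ENNReal.toReal_ofReal hr0.le]
  have hmain : (∫⁻ x, (‖f ε x - 1‖₊ : ℝ≥0∞) ^ r ∂μ) ≤ ENNReal.ofReal (b ^ r) := by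
    have hpt : ∀ x, (‖f ε x - 1‖₊ : ℝ≥0∞) ^ r
        ≤ ENNReal.ofReal (η ^ r) + ENNReal.ofReal (K * PiFn γ (f ε x)) := by
      intro x
      rw [← enorm_eq_nnnorm, Real.enorm_eq_ofReal_abs, ENNReal.ofReal_rpow_of_nonneg (abs_nonneg _) hr0.le,
        ← ENNReal.ofReal_add (Real.rpow_nonneg hη.le r)
          (mul_nonneg hK.le (PiFn_nonneg hγ (hnn ε hε0 x)))]
      exact ENNReal.ofReal_le_ofReal (hkey _ (hnn ε hε0 x))
    calc (∫⁻ x, (‖f ε x - 1‖₊ : ℝ≥0∞) ^ r ∂μ)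
        ≤ ∫⁻ x, (ENNReal.ofReal (η ^ r) + ENNReal.ofReal (K * PiFn γ (f ε x))) ∂μ :=
          lintegral_mono hpt
      _ = ENNReal.ofReal (η ^ r) * μ Set.univ
          + ∫⁻ x, ENNReal.ofReal (K * PiFn γ (f ε x)) ∂μ := by
          rw [lintegral_add_left measurable_const, lintegral_const]
      _ = ENNReal.ofReal (η ^ r) * μ Set.univ
          + ENNReal.ofReal K * ∫⁻ x, ENNReal.ofReal (PiFn γ (f ε x)) ∂μ := by
          congr 1
          have hmul : ∀ x, ENNReal.ofReal (K * PiFn γ (f ε x))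
              = ENNReal.ofReal K * ENNReal.ofReal (PiFn γ (f ε x)) :=
            fun x => ENNReal.ofReal_mul hK.le
          simp_rw [hmul]
          rw [lintegral_const_mul' _ _ ENNReal.ofReal_ne_top]
      _ ≤ ENNReal.ofReal (η ^ r) * ENNReal.ofReal T
          + ENNReal.ofReal K * ENNReal.ofReal (C * ε ^ 2) := by
          gcongr
          · rw [hT, ENNReal.ofReal_toReal (measure_ne_top μ _)]
          · exact hbd ε hε0
      _ = ENNReal.ofReal (η ^ r * T + K * (C * ε ^ 2)) := by
          rw [← ENNReal.ofReal_mul (Real.rpow_nonneg hη.le r),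
            ← ENNReal.ofReal_mul hK.le,
            ← ENNReal.ofReal_add (mul_nonneg (Real.rpow_nonneg hη.le r) hT0)
              (mul_nonneg hK.le (by positivity))]
      _ ≤ ENNReal.ofReal (b ^ r) := by
          apply ENNReal.ofReal_le_ofReal
          nlinarith
  calc (∫⁻ x, (‖f ε x - 1‖₊ : ℝ≥0∞) ^ r ∂μ) ^ (1 / r)
      ≤ ENNReal.ofReal (b ^ r) ^ (1 / r) := ENNReal.rpow_le_rpow hmain (by positivity)
    _ = ENNReal.ofReal b := by
        rw [← ENNReal.ofReal_rpow_of_nonneg hb.le hr0.le, ← ENNReal.rpow_mul,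
          mul_one_div_cancel hr0.ne', ENNReal.rpow_one]
    _ ≤ a := hba
end
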